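/- arXiv:1305.3397 — 4 statements merged into one kernel-verified Lean document; each statement's English description precedes it below -/
import Mathlib

section
/- Let d ≥ 2, ε ∈ (0, 1/2) and let 1 ≤ s < N be integers. Then for every X_s ∈ (𝕋^d)^s, one has 𝒵♭_{(s+1,N)}(X_s) ≤ s (N−s) ε^d κ_d 𝒵_{N−s−1}. -/
open MeasureTheory Real

noncomputable section

/-- The unit torus `(ℝ/ℤ)^d`, with normalized Haar (Lebesgue) measure. -/
abbrev Torus (d : ℕ) := Fin d → AddCircle (1 : ℝ)

/-- Euclidean space `ℝ^d` (velocity space). -/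
abbrev Vel (d : ℕ) := EuclideanSpace ℝ (Fin d)

/-- The quotient (Euclidean) distance on the torus `(ℝ/ℤ)^d`. -/
noncomputable def tdist {d : ℕ} (x y : Torus d) : ℝ :=
  Real.sqrt (∑ i, dist (x i) (y i) ^ 2)

open scoped Classical in
/-- Real-valued indicator of a proposition. -/
noncomputable def ind (P : Prop) : ℝ := if P then 1 else 0

/-- The hard-sphere partition function
`𝒵_s = ∫_{(𝕋^d)^s} ∏_{1≤i<j≤s} 1_{d(x_i,x_j)>ε} dX_s`  (with `𝒵_0 = 𝒵_1 = 1`). -/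
noncomputable def Zpart (d : ℕ) (ε : ℝ) (s : ℕ) : ℝ :=
  ∫ X : Fin s → Torus d, ∏ p ∈ Finset.univ.filter (fun p : Fin s × Fin s => p.1 < p.2),
      ind (ε < tdist (X p.1) (X p.2))

/-- The Maxwellian `M_β(v) = (β/2π)^{d/2} exp(-β|v|²/2)`. -/
noncomputable def Maxwellian (d : ℕ) (β : ℝ) (v : Vel d) : ℝ :=
  (β / (2 * π)) ^ ((d : ℝ) / 2) * Real.exp (-(β / 2) * ‖v‖ ^ 2)

/-- Indicator of the exclusion domain `𝒟_ε^s` (in the position variables). -/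
noncomputable def exclInd (d : ℕ) (ε : ℝ) {s : ℕ} (X : Fin s → Torus d) : ℝ :=
  ind (∀ i j : Fin s, i ≠ j → ε < tdist (X i) (X j))

/-- The Gibbs density `M_{N,β}(Z_N) = 𝒵_N⁻¹ 1_{𝒟_ε^N}(X_N) M_β^{⊗N}(V_N)`. -/
noncomputable def gibbs (d : ℕ) (β ε : ℝ) (N : ℕ)
    (X : Fin N → Torus d) (V : Fin N → Vel d) : ℝ :=
  (Zpart d ε N)⁻¹ * exclInd d ε X * ∏ i, Maxwellian d β (V i)

/-- Concatenation of an `s`-tuple with an `(N-s)`-tuple into an `N`-tuple. -/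
def extend {α : Sort*} {s N : ℕ} (h : s ≤ N) (a : Fin s → α) (b : Fin (N - s) → α) :
    Fin N → α :=
  fun i => if hi : (i : ℕ) < s then a ⟨i, hi⟩ else b ⟨(i : ℕ) - s, by omega⟩

/-- The `s`-th marginal `M_{N,β}^{(s)}(Z_s) = ∫ M_{N,β}(Z_N) dz_{s+1}…dz_N`. -/
noncomputable def gibbsMarginal (d : ℕ) (β ε : ℝ) {s N : ℕ} (h : s ≤ N)
    (X : Fin s → Torus d) (V : Fin s → Vel d) : ℝ :=
  ∫ Y : (Fin (N - s) → Torus d) × (Fin (N - s) → Vel d),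
    gibbs d β ε N (extend h X Y.1) (extend h V Y.2)

/-- `𝒵♭_{(s+1,N)}(X_s) = ∫_{(𝕋^d)^{N-s}} (1 - ∏_{i≤s<j} 1_{d(x_i,x_j)>ε})
∏_{s+1≤i<j≤N} 1_{d(x_i,x_j)>ε} dx_{s+1}…dx_N`. -/
noncomputable def Zflat (d : ℕ) (ε : ℝ) {s N : ℕ} (_h : s ≤ N) (X : Fin s → Torus d) : ℝ :=
  ∫ Y : Fin (N - s) → Torus d,
    (1 - ∏ i : Fin s, ∏ j : Fin (N - s), ind (ε < tdist (X i) (Y j))) *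
      ∏ p ∈ Finset.univ.filter (fun p : Fin (N - s) × Fin (N - s) => p.1 < p.2),
        ind (ε < tdist (Y p.1) (Y p.2))

/-- `κ_d`, the Lebesgue volume of the unit ball of `ℝ^d`. -/
noncomputable def ballVol (d : ℕ) : ℝ :=
  (volume (Metric.ball (0 : Vel d) 1)).toReal

lemma ind_nonneg (P : Prop) : 0 ≤ ind P := by unfold ind; split <;> norm_num
lemma ind_le_one (P : Prop) : ind P ≤ 1 := by unfold ind; split <;> norm_num
lemma one_sub_ind (P : Prop) : 1 - ind P = ind (¬ P) := by
  classical
  unfold ind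
  by_cases h : P <;> simp [h]

lemma continuous_tdist {d : ℕ} : Continuous (fun p : Torus d × Torus d => tdist p.1 p.2) := by
  unfold tdist
  apply Real.continuous_sqrt.comp
  exact continuous_finset_sum _ fun i _ =>
    (((continuous_apply i).comp continuous_fst).dist ((continuous_apply i).comp continuous_snd)).pow 2

lemma measurable_tdist {d : ℕ} {α : Type*} [MeasurableSpace α] {f g : α → Torus d}
    (hf : Measurable f) (hg : Measurable g) : Measurable (fun a => tdist (f a) (g a)) := by
  unfold tdist
  apply Real.continuous_sqrt.measurable.comp
  apply Finset.measurable_sum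
  intro i _
  exact (((measurable_pi_apply i).comp hf).dist ((measurable_pi_apply i).comp hg)).pow_const 2

lemma measurableSet_tdist_gt {d : ℕ} {α : Type*} [MeasurableSpace α] {f g : α → Torus d}
    (hf : Measurable f) (hg : Measurable g) (ε : ℝ) :
    MeasurableSet {a | ε < tdist (f a) (g a)} :=
  measurableSet_lt measurable_const (measurable_tdist hf hg)

lemma measurableSet_tdist_le {d : ℕ} {α : Type*} [MeasurableSpace α] {f g : α → Torus d}
    (hf : Measurable f) (hg : Measurable g) (ε : ℝ) :
    MeasurableSet {a | tdist (f a) (g a) ≤ ε} :=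
  measurableSet_le (measurable_tdist hf hg) measurable_const

lemma measurable_ind {α : Type*} [MeasurableSpace α] {p : α → Prop}
    (h : MeasurableSet {a | p a}) : Measurable (fun a => ind (p a)) := by
  classical
  have : (fun a => ind (p a)) = Set.indicator {a | p a} (fun _ => (1:ℝ)) := by
    funext a; by_cases ha : p a <;> simp [ind, ha]
  rw [this]
  exact measurable_const.indicator h

lemma integral_ind {α : Type*} [MeasureSpace α] {p : α → Prop}
    (h : MeasurableSet {a | p a}) : ∫ a, ind (p a) = (volume {a | p a}).toReal := by
  classical
  have : (fun a => ind (p a)) = Set.indicator {a | p a} (fun _ => (1:ℝ)) := by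
    funext a; by_cases ha : p a <;> simp [ind, ha]
  rw [this]
  exact integral_indicator_one h

lemma one_sub_prod_le {ι : Type*} (s : Finset ι) (f : ι → ℝ) (h0 : ∀ i, 0 ≤ f i)
    (h1 : ∀ i, f i ≤ 1) : 1 - ∏ i ∈ s, f i ≤ ∑ i ∈ s, (1 - f i) := by
  induction s using Finset.cons_induction with
  | empty => simp
  | cons a s ha ih =>
    rw [Finset.prod_cons, Finset.sum_cons]
    have hp0 : 0 ≤ ∏ i ∈ s, f i := Finset.prod_nonneg fun i _ => h0 i
    have hp1 : ∏ i ∈ s, f i ≤ 1 := Finset.prod_le_one (fun i _ => h0 i) (fun i _ => h1 i)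
    nlinarith [h0 a, h1 a]

lemma prod_le_prod_subset {ι : Type*} (s t : Finset ι) (hts : t ⊆ s) (f : ι → ℝ)
    (h0 : ∀ i, 0 ≤ f i) (h1 : ∀ i, f i ≤ 1) : ∏ i ∈ s, f i ≤ ∏ i ∈ t, f i := by
  classical
  rw [← Finset.prod_sdiff hts]
  have hA : ∏ i ∈ s \ t, f i ≤ 1 := Finset.prod_le_one (fun i _ => h0 i) (fun i _ => h1 i)
  have hA0 : 0 ≤ ∏ i ∈ s \ t, f i := Finset.prod_nonneg fun i _ => h0 i
  have hB0 : 0 ≤ ∏ i ∈ t, f i := Finset.prod_nonneg fun i _ => h0 i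
  nlinarith

lemma sqrt_le_iff' {u ε : ℝ} (hu : 0 ≤ u) (hε : 0 ≤ ε) : Real.sqrt u ≤ ε ↔ u ≤ ε ^ 2 := by
  constructor
  · intro h; nlinarith [Real.sq_sqrt hu, Real.sqrt_nonneg u]
  · intro h
    calc Real.sqrt u ≤ Real.sqrt (ε ^ 2) := Real.sqrt_le_sqrt h
    _ = ε := by rw [Real.sqrt_sq hε]


open Set in
lemma pi_restrict_eq (d : ℕ) (a b : ℝ) :
    Measure.pi (fun _ : Fin d => (volume : Measure ℝ).restrict (Ioc a b)) =
      (volume : Measure (Fin d → ℝ)).restrict (Set.pi Set.univ fun _ => Ioc a b) := by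
  refine Measure.pi_eq fun s hs => ?_
  rw [Measure.restrict_apply (MeasurableSet.univ_pi hs), ← Set.pi_inter_distrib,
    volume_pi, Measure.pi_pi]
  exact Finset.prod_congr rfl fun i _ => (Measure.restrict_apply (hs i)).symm

open Set in
lemma measurePreserving_torus_mk (d : ℕ) :
    MeasurePreserving (fun (t : Fin d → ℝ) (i : Fin d) => ((t i : ℝ) : AddCircle (1:ℝ)))
      (Measure.pi fun _ : Fin d => (volume : Measure ℝ).restrict (Ioc (-(1/2) : ℝ) (-(1/2) + 1)))
      (volume : Measure (Torus d)) := by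
  have h1 : MeasurePreserving ((↑) : ℝ → AddCircle (1:ℝ))
      ((volume : Measure ℝ).restrict (Ioc (-(1/2) : ℝ) (-(1/2) + 1))) volume :=
    UnitAddCircle.measurePreserving_mk (-(1/2))
  have hmeas : Measurable (fun (t : Fin d → ℝ) (i : Fin d) => ((t i : ℝ) : AddCircle (1:ℝ))) :=
    measurable_pi_iff.2 fun i => (AddCircle.measurable_mk' (a := (1:ℝ))).comp (measurable_pi_apply i)
  refine ⟨hmeas, ?_⟩
  rw [show (volume : Measure (Torus d)) = Measure.pi (fun _ : Fin d => volume) from rfl]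
  refine (Measure.pi_eq fun s hs => ?_).symm
  rw [Measure.map_apply hmeas (MeasurableSet.univ_pi hs)]
  have hpre : (fun (t : Fin d → ℝ) (i : Fin d) => ((t i : ℝ) : AddCircle (1:ℝ))) ⁻¹'
      (Set.pi Set.univ s) = Set.pi Set.univ fun i => ((↑) : ℝ → AddCircle (1:ℝ)) ⁻¹' (s i) := by
    ext t; simp [Set.mem_pi]
  rw [hpre, Measure.pi_pi]
  exact Finset.prod_congr rfl fun i _ => h1.measure_preimage (hs i).nullMeasurableSet
open Set in
lemma torus_ball_le (d : ℕ) {ε : ℝ} (hε0 : 0 < ε) (hε : ε < 1/2) (x : Torus d) :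
    (volume {y : Torus d | tdist x y ≤ ε}).toReal ≤ ε ^ d * ballVol d := by
  have hmeas : ∀ z : Torus d, MeasurableSet {y : Torus d | tdist z y ≤ ε} := fun z =>
    measurableSet_tdist_le measurable_const measurable_id ε
  -- translation invariance: reduce to z = 0
  have htrans : volume {y : Torus d | tdist x y ≤ ε} = volume {y : Torus d | tdist 0 y ≤ ε} := by
    have hmp : MeasurePreserving (fun y : Torus d => x + y) volume volume :=
      measurePreserving_add_left volume x
    have := hmp.measure_preimage (hmeas x).nullMeasurableSet
    have hpre : (fun y : Torus d => x + y) ⁻¹' {y | tdist x y ≤ ε} = {y | tdist 0 y ≤ ε} := by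
      ext y
      simp only [Set.mem_preimage, Set.mem_setOf_eq]
      have : tdist x (x + y) = tdist 0 y := by
        unfold tdist
        congr 1
        refine Finset.sum_congr rfl fun i _ => ?_
        simp [dist_eq_norm]
      rw [this]
    rw [hpre] at this
    exact this.symm
  rw [htrans]
  -- pull back to ℝ^d
  have hΦ := measurePreserving_torus_mk d
  have hvol : volume {y : Torus d | tdist 0 y ≤ ε} =
      (Measure.pi fun _ : Fin d => (volume : Measure ℝ).restrict (Ioc (-(1/2) : ℝ) (-(1/2) + 1)))
        ((fun (t : Fin d → ℝ) (i : Fin d) => ((t i : ℝ) : AddCircle (1:ℝ))) ⁻¹'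
          {y : Torus d | tdist 0 y ≤ ε}) :=
    (hΦ.measure_preimage (hmeas 0).nullMeasurableSet).symm
  rw [hvol, pi_restrict_eq, Measure.restrict_apply']
  swap
  · exact MeasurableSet.univ_pi fun _ => measurableSet_Ioc
  -- the intersection is contained in the Euclidean ball
  have hsub : (fun (t : Fin d → ℝ) (i : Fin d) => ((t i : ℝ) : AddCircle (1:ℝ))) ⁻¹'
      {y : Torus d | tdist 0 y ≤ ε} ∩ (Set.pi Set.univ fun _ => Ioc (-(1/2) : ℝ) (-(1/2) + 1))
      ⊆ {t : Fin d → ℝ | ∑ i, (t i) ^ 2 ≤ ε ^ 2} := by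
    intro t ht
    obtain ⟨ht1, ht2⟩ := ht
    simp only [Set.mem_preimage, Set.mem_setOf_eq] at ht1 ⊢
    have habs : ∀ i, dist (0 : AddCircle (1:ℝ)) ((t i : ℝ) : AddCircle (1:ℝ)) = |t i| := by
      intro i
      have hti : t i ∈ Ioc (-(1/2) : ℝ) (-(1/2) + 1) := ht2 i (Set.mem_univ i)
      rw [dist_comm, dist_zero_right]
      refine (AddCircle.norm_coe_eq_abs_iff (p := (1:ℝ)) one_ne_zero).2 ?_
      rw [abs_one]
      obtain ⟨h1, h2⟩ := hti
      rw [abs_le]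
      constructor <;> linarith
    unfold tdist at ht1
    have hsum : ∑ i, dist ((0 : Torus d) i) (((t i : ℝ) : AddCircle (1:ℝ))) ^ 2
        = ∑ i, (t i) ^ 2 := by
      refine Finset.sum_congr rfl fun i _ => ?_
      have : ((0 : Torus d) i) = (0 : AddCircle (1:ℝ)) := rfl
      rw [this, habs i, sq_abs]
    rw [hsum] at ht1
    exact (sqrt_le_iff' (Finset.sum_nonneg fun i _ => sq_nonneg _) hε0.le).1 ht1
  have hball : (volume : Measure (Fin d → ℝ)) {t : Fin d → ℝ | ∑ i, (t i) ^ 2 ≤ ε ^ 2}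
      = ENNReal.ofReal (ε ^ d) * volume (Metric.ball (0 : Vel d) 1) := by
    have he := EuclideanSpace.volume_preserving_symm_measurableEquiv_toLp (Fin d)
    have hmB : MeasurableSet {t : Fin d → ℝ | ∑ i, (t i) ^ 2 ≤ ε ^ 2} := by
      refine measurableSet_le ?_ measurable_const
      exact Finset.measurable_sum _ fun i _ => (measurable_pi_apply i).pow_const 2
    rw [← he.measure_preimage hmB.nullMeasurableSet]
    have hpre : (MeasurableEquiv.toLp 2 (Fin d → ℝ)).symm ⁻¹'
        {t : Fin d → ℝ | ∑ i, (t i) ^ 2 ≤ ε ^ 2} = Metric.closedBall (0 : Vel d) ε := by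
      ext v
      simp only [Set.mem_preimage, Set.mem_setOf_eq, Metric.mem_closedBall, dist_zero_right]
      have hnorm : ‖v‖ = Real.sqrt (∑ i, (v i) ^ 2) := by
        rw [EuclideanSpace.norm_eq]
        congr 1
        refine Finset.sum_congr rfl fun i _ => ?_
        rw [Real.norm_eq_abs, sq_abs]
      have hcoord : ∀ i, ((MeasurableEquiv.toLp 2 (Fin d → ℝ)).symm v) i = v i := fun _ => rfl
      constructor
      · intro h
        rw [hnorm]
        refine (sqrt_le_iff' (Finset.sum_nonneg fun i _ => sq_nonneg _) hε0.le).2 ?_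
        simpa [hcoord] using h
      · intro h
        rw [hnorm] at h
        have := (sqrt_le_iff' (Finset.sum_nonneg fun i _ => sq_nonneg _) hε0.le).1 h
        simpa [hcoord] using this
    rw [hpre, Measure.addHaar_closedBall _ _ hε0.le, finrank_euclideanSpace_fin]
  calc ((volume : Measure (Fin d → ℝ)) _).toReal
      ≤ ((volume : Measure (Fin d → ℝ)) {t : Fin d → ℝ | ∑ i, (t i) ^ 2 ≤ ε ^ 2}).toReal := by
        refine ENNReal.toReal_mono ?_ (measure_mono hsub)
        rw [hball]
        exact ENNReal.mul_ne_top ENNReal.ofReal_ne_top measure_ball_lt_top.ne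
    _ = ε ^ d * ballVol d := by
        rw [hball, ENNReal.toReal_mul, ENNReal.toReal_ofReal (pow_nonneg hε0.le d)]
        rfl

lemma Zpart_nonneg (d : ℕ) (ε : ℝ) (s : ℕ) : 0 ≤ Zpart d ε s :=
  integral_nonneg fun X => Finset.prod_nonneg fun p _ => ind_nonneg _
lemma step3 (d : ℕ) {ε : ℝ} (hε0 : 0 < ε) (hε : ε < 1/2) (m : ℕ) (x : Torus d)
    (j : Fin (m+1)) :
    ∫ Y : Fin (m+1) → Torus d, (1 - ind (ε < tdist x (Y j))) *
      ∏ p ∈ (Finset.univ.filter (fun p : Fin (m+1) × Fin (m+1) => p.1 < p.2)).filter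
          (fun p => p.1 ≠ j ∧ p.2 ≠ j), ind (ε < tdist (Y p.1) (Y p.2))
      ≤ ε ^ d * ballVol d * Zpart d ε m := by
  classical
  have hFe : ∀ Y : Fin (m+1) → Torus d,
      (1 - ind (ε < tdist x (Y j))) *
        ∏ p ∈ (Finset.univ.filter (fun p : Fin (m+1) × Fin (m+1) => p.1 < p.2)).filter
            (fun p => p.1 ≠ j ∧ p.2 ≠ j), ind (ε < tdist (Y p.1) (Y p.2))
      = (1 - ind (ε < tdist x (((MeasurableEquiv.piFinSuccAbove
            (fun _ : Fin (m+1) => Torus d) j) Y).1))) *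
        ∏ p ∈ Finset.univ.filter (fun p : Fin m × Fin m => p.1 < p.2),
          ind (ε < tdist (((MeasurableEquiv.piFinSuccAbove
            (fun _ : Fin (m+1) => Torus d) j) Y).2 p.1)
            (((MeasurableEquiv.piFinSuccAbove (fun _ : Fin (m+1) => Torus d) j) Y).2 p.2)) := by
    intro Y
    have h1 : ((MeasurableEquiv.piFinSuccAbove (fun _ : Fin (m+1) => Torus d) j) Y).1 = Y j := rfl
    have h2 : ∀ k, ((MeasurableEquiv.piFinSuccAbove (fun _ : Fin (m+1) => Torus d) j) Y).2 k
        = Y (j.succAbove k) := fun k => rfl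
    simp only [h1, h2]
    congr 1
    refine (Finset.prod_bij (fun (p : Fin m × Fin m) (_ : p ∈ Finset.univ.filter
        (fun p : Fin m × Fin m => p.1 < p.2)) => (j.succAbove p.1, j.succAbove p.2))
      ?_ ?_ ?_ ?_).symm
    · intro p hp
      simp only [Finset.mem_filter, Finset.mem_univ, true_and] at hp ⊢
      exact ⟨by rwa [Fin.succAbove_lt_succAbove_iff], Fin.succAbove_ne j p.1,
        Fin.succAbove_ne j p.2⟩
    · intro a ha b hb hab
      have h1 := congrArg Prod.fst hab
      have h2 := congrArg Prod.snd hab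
      simp only at h1 h2
      exact Prod.ext (Fin.succAbove_right_injective h1) (Fin.succAbove_right_injective h2)
    · intro b hb
      simp only [Finset.mem_filter, Finset.mem_univ, true_and] at hb
      obtain ⟨hlt, hb1, hb2⟩ := hb
      obtain ⟨q1, hq1⟩ := Fin.exists_succAbove_eq hb1
      obtain ⟨q2, hq2⟩ := Fin.exists_succAbove_eq hb2
      refine ⟨(q1, q2), ?_, ?_⟩
      · simp only [Finset.mem_filter, Finset.mem_univ, true_and]
        rw [← Fin.succAbove_lt_succAbove_iff (p := j), hq1, hq2]
        exact hlt
      · simp [hq1, hq2]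
    · intro p hp
      rfl
  simp_rw [hFe]
  rw [(volume_preserving_piFinSuccAbove (fun _ : Fin (m+1) => Torus d) j).integral_comp'
    (fun z => (1 - ind (ε < tdist x z.1)) *
      ∏ p ∈ Finset.univ.filter (fun p : Fin m × Fin m => p.1 < p.2),
        ind (ε < tdist (z.2 p.1) (z.2 p.2)))]
  rw [Measure.volume_eq_prod, integral_prod_mul (fun y : Torus d => 1 - ind (ε < tdist x y))
    (fun Z : Fin m → Torus d => ∏ p ∈ Finset.univ.filter (fun p : Fin m × Fin m => p.1 < p.2),
      ind (ε < tdist (Z p.1) (Z p.2)))]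
  have h1 : ∫ y : Torus d, (1 - ind (ε < tdist x y))
      = (volume {y : Torus d | tdist x y ≤ ε}).toReal := by
    simp_rw [one_sub_ind, not_lt]
    exact integral_ind (measurableSet_tdist_le measurable_const measurable_id ε)
  rw [h1]
  exact mul_le_mul_of_nonneg_right (torus_ball_le d hε0 hε x) (Zpart_nonneg d ε m)
set_option maxHeartbeats 1000000 in
lemma key_bound (d : ℕ) {ε : ℝ} (hε0 : 0 < ε) (hε : ε < 1/2) (s m : ℕ) (X : Fin s → Torus d) :
    ∫ Y : Fin (m+1) → Torus d,
      (1 - ∏ i : Fin s, ∏ j : Fin (m+1), ind (ε < tdist (X i) (Y j))) *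
        ∏ p ∈ Finset.univ.filter (fun p : Fin (m+1) × Fin (m+1) => p.1 < p.2),
          ind (ε < tdist (Y p.1) (Y p.2))
      ≤ (s : ℝ) * ((m+1 : ℕ) : ℝ) * (ε ^ d * ballVol d * Zpart d ε m) := by
  classical
  have hg0 : ∀ (q : Fin s × Fin (m+1)) (Y : Fin (m+1) → Torus d),
      0 ≤ (1 - ind (ε < tdist (X q.1) (Y q.2))) *
        ∏ p ∈ (Finset.univ.filter (fun p : Fin (m+1) × Fin (m+1) => p.1 < p.2)).filter
            (fun p => p.1 ≠ q.2 ∧ p.2 ≠ q.2), ind (ε < tdist (Y p.1) (Y p.2)) := fun q Y =>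
    mul_nonneg (by linarith [ind_le_one (ε < tdist (X q.1) (Y q.2))])
      (Finset.prod_nonneg fun p _ => ind_nonneg _)
  have hg1 : ∀ (q : Fin s × Fin (m+1)) (Y : Fin (m+1) → Torus d),
      (1 - ind (ε < tdist (X q.1) (Y q.2))) *
        ∏ p ∈ (Finset.univ.filter (fun p : Fin (m+1) × Fin (m+1) => p.1 < p.2)).filter
            (fun p => p.1 ≠ q.2 ∧ p.2 ≠ q.2), ind (ε < tdist (Y p.1) (Y p.2)) ≤ 1 := by
    intro q Y
    have h1 : 1 - ind (ε < tdist (X q.1) (Y q.2)) ≤ 1 := by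
      linarith [ind_nonneg (ε < tdist (X q.1) (Y q.2))]
    have h2 : ∏ p ∈ (Finset.univ.filter (fun p : Fin (m+1) × Fin (m+1) => p.1 < p.2)).filter
        (fun p => p.1 ≠ q.2 ∧ p.2 ≠ q.2), ind (ε < tdist (Y p.1) (Y p.2)) ≤ 1 :=
      Finset.prod_le_one (fun p _ => ind_nonneg _) (fun p _ => ind_le_one _)
    have h3 : (0:ℝ) ≤ ∏ p ∈ (Finset.univ.filter
        (fun p : Fin (m+1) × Fin (m+1) => p.1 < p.2)).filter
        (fun p => p.1 ≠ q.2 ∧ p.2 ≠ q.2), ind (ε < tdist (Y p.1) (Y p.2)) :=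
      Finset.prod_nonneg fun p _ => ind_nonneg _
    have h0 : 0 ≤ 1 - ind (ε < tdist (X q.1) (Y q.2)) := by
      linarith [ind_le_one (ε < tdist (X q.1) (Y q.2))]
    calc _ ≤ 1 * 1 := mul_le_mul h1 h2 h3 zero_le_one
    _ = (1:ℝ) := by ring
  have hint : ∀ q : Fin s × Fin (m+1), Integrable (fun Y : Fin (m+1) → Torus d =>
      (1 - ind (ε < tdist (X q.1) (Y q.2))) *
        ∏ p ∈ (Finset.univ.filter (fun p : Fin (m+1) × Fin (m+1) => p.1 < p.2)).filter
            (fun p => p.1 ≠ q.2 ∧ p.2 ≠ q.2), ind (ε < tdist (Y p.1) (Y p.2))) := by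
    intro q
    have hmeas : Measurable (fun Y : Fin (m+1) → Torus d =>
        (1 - ind (ε < tdist (X q.1) (Y q.2))) *
          ∏ p ∈ (Finset.univ.filter (fun p : Fin (m+1) × Fin (m+1) => p.1 < p.2)).filter
              (fun p => p.1 ≠ q.2 ∧ p.2 ≠ q.2), ind (ε < tdist (Y p.1) (Y p.2))) := by
      apply Measurable.mul
      · exact measurable_const.sub
          (measurable_ind (measurableSet_tdist_gt measurable_const (measurable_pi_apply q.2) ε))
      · exact Finset.measurable_prod _ fun p _ => measurable_ind
          (measurableSet_tdist_gt (measurable_pi_apply p.1) (measurable_pi_apply p.2) ε)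
    refine (integrable_const (1:ℝ)).mono' hmeas.aestronglyMeasurable ?_
    refine Filter.Eventually.of_forall fun Y => ?_
    rw [Real.norm_eq_abs, abs_of_nonneg (hg0 q Y)]
    exact hg1 q Y
  have h_pt : ∀ Y : Fin (m+1) → Torus d,
      (1 - ∏ i : Fin s, ∏ j : Fin (m+1), ind (ε < tdist (X i) (Y j))) *
        ∏ p ∈ Finset.univ.filter (fun p : Fin (m+1) × Fin (m+1) => p.1 < p.2),
          ind (ε < tdist (Y p.1) (Y p.2))
      ≤ ∑ q : Fin s × Fin (m+1), (1 - ind (ε < tdist (X q.1) (Y q.2))) *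
          ∏ p ∈ (Finset.univ.filter (fun p : Fin (m+1) × Fin (m+1) => p.1 < p.2)).filter
              (fun p => p.1 ≠ q.2 ∧ p.2 ≠ q.2), ind (ε < tdist (Y p.1) (Y p.2)) := by
    intro Y
    have hQ0 : (0:ℝ) ≤ ∏ p ∈ Finset.univ.filter
        (fun p : Fin (m+1) × Fin (m+1) => p.1 < p.2), ind (ε < tdist (Y p.1) (Y p.2)) :=
      Finset.prod_nonneg fun p _ => ind_nonneg _
    have hPP : ∏ i : Fin s, ∏ j : Fin (m+1), ind (ε < tdist (X i) (Y j))
        = ∏ q : Fin s × Fin (m+1), ind (ε < tdist (X q.1) (Y q.2)) := by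
      rw [Fintype.prod_prod_type]
    rw [hPP]
    calc (1 - ∏ q : Fin s × Fin (m+1), ind (ε < tdist (X q.1) (Y q.2))) *
          ∏ p ∈ Finset.univ.filter (fun p : Fin (m+1) × Fin (m+1) => p.1 < p.2),
            ind (ε < tdist (Y p.1) (Y p.2))
        ≤ (∑ q : Fin s × Fin (m+1), (1 - ind (ε < tdist (X q.1) (Y q.2)))) *
          ∏ p ∈ Finset.univ.filter (fun p : Fin (m+1) × Fin (m+1) => p.1 < p.2),
            ind (ε < tdist (Y p.1) (Y p.2)) := by
          refine mul_le_mul_of_nonneg_right ?_ hQ0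
          exact one_sub_prod_le _ _ (fun q => ind_nonneg _) (fun q => ind_le_one _)
      _ = ∑ q : Fin s × Fin (m+1), (1 - ind (ε < tdist (X q.1) (Y q.2))) *
          ∏ p ∈ Finset.univ.filter (fun p : Fin (m+1) × Fin (m+1) => p.1 < p.2),
            ind (ε < tdist (Y p.1) (Y p.2)) := Finset.sum_mul _ _ _
      _ ≤ _ := by
          refine Finset.sum_le_sum fun q _ => ?_
          refine mul_le_mul_of_nonneg_left ?_
            (by linarith [ind_le_one (ε < tdist (X q.1) (Y q.2))])
          exact prod_le_prod_subset _ _ (Finset.filter_subset _ _) _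
            (fun p => ind_nonneg _) (fun p => ind_le_one _)
  calc ∫ Y : Fin (m+1) → Torus d,
      (1 - ∏ i : Fin s, ∏ j : Fin (m+1), ind (ε < tdist (X i) (Y j))) *
        ∏ p ∈ Finset.univ.filter (fun p : Fin (m+1) × Fin (m+1) => p.1 < p.2),
          ind (ε < tdist (Y p.1) (Y p.2))
      ≤ ∫ Y : Fin (m+1) → Torus d, ∑ q : Fin s × Fin (m+1),
          (1 - ind (ε < tdist (X q.1) (Y q.2))) *
            ∏ p ∈ (Finset.univ.filter (fun p : Fin (m+1) × Fin (m+1) => p.1 < p.2)).filter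
                (fun p => p.1 ≠ q.2 ∧ p.2 ≠ q.2), ind (ε < tdist (Y p.1) (Y p.2)) := by
        refine integral_mono_of_nonneg (Filter.Eventually.of_forall fun Y => ?_)
          (integrable_finset_sum _ fun q _ => hint q) (Filter.Eventually.of_forall h_pt)
        have hP1 : ∏ i : Fin s, ∏ j : Fin (m+1), ind (ε < tdist (X i) (Y j)) ≤ 1 :=
          Finset.prod_le_one (fun i _ => Finset.prod_nonneg fun j _ => ind_nonneg _)
            (fun i _ => Finset.prod_le_one (fun j _ => ind_nonneg _) (fun j _ => ind_le_one _))
        exact mul_nonneg (by linarith) (Finset.prod_nonneg fun p _ => ind_nonneg _)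
    _ = ∑ q : Fin s × Fin (m+1), ∫ Y : Fin (m+1) → Torus d,
          (1 - ind (ε < tdist (X q.1) (Y q.2))) *
            ∏ p ∈ (Finset.univ.filter (fun p : Fin (m+1) × Fin (m+1) => p.1 < p.2)).filter
                (fun p => p.1 ≠ q.2 ∧ p.2 ≠ q.2), ind (ε < tdist (Y p.1) (Y p.2)) :=
        integral_finset_sum _ fun q _ => hint q
    _ ≤ ∑ _q : Fin s × Fin (m+1), ε ^ d * ballVol d * Zpart d ε m :=
        Finset.sum_le_sum fun q _ => step3 d hε0 hε m (X q.1) q.2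
    _ = (s : ℝ) * ((m+1 : ℕ) : ℝ) * (ε ^ d * ballVol d * Zpart d ε m) := by
        rw [Finset.sum_const, Finset.card_univ, Fintype.card_prod, Fintype.card_fin,
          Fintype.card_fin, nsmul_eq_mul]
        push_cast
        ring

/-- The bound `𝒵♭_{(s+1,N)}(X_s) ≤ s (N-s) ε^d κ_d 𝒵_{N-s-1}`. -/
theorem Zflat_upper_bound
    (d : ℕ) (hd : 2 ≤ d) (ε : ℝ) (hε0 : 0 < ε) (hε : ε < 1/2)
    (s N : ℕ) (hs : 1 ≤ s) (hsN : s < N) (X : Fin s → Torus d) :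
    Zflat d ε hsN.le X ≤
      (s : ℝ) * ((N - s : ℕ) : ℝ) * ε ^ d * ballVol d * Zpart d ε (N - s - 1) := by
  obtain ⟨m, hm⟩ : ∃ m, N - s = m + 1 := ⟨N - s - 1, by omega⟩
  have hm1 : N - s - 1 = m := by omega
  unfold Zflat
  rw [hm1, hm]
  refine le_trans (key_bound d hε0 hε s m X) (le_of_eq ?_)
  push_cast
  ring

end
end

section
/- Let d ≥ 2, β > 0, and let ρ⁰ : 𝕋^d → ℝ be a continuous probability density. Define the perturbed initial data f_N^0(Z_N) := M_{N,β}(Z_N) ρ⁰(x₁) and its marginals f_N^{0(s)}(Z_s) := ∫ f_N^0(Z_N) dz_{s+1}…dz_N = ρ⁰(x₁) M_{N,β}^{(s)}(Z_s), and set g^{0(s)}(Z_s) := ρ⁰(x₁) M_β^{⊗s}(V_s). There is a constant C > 0 depending only on d such that for all integers 1 ≤ s ≤ N and all ε ∈ (0, 1/2), setting α := N ε^{d−1} and assuming ε α κ_d ≤ 1/2, one has the pointwise bound | ( f_N^{0(s)} − g^{0(s)} ) 1_{𝒟_ε^s} | ≤ C^s ε α M_β^{⊗s} ‖ρ⁰‖_{L^∞}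 on (𝕋^d × ℝ^d)^s. -/
open MeasureTheory Real

noncomputable section

namespace HSAux

lemma fact_zero_lt_one_real : Fact ((0:ℝ) < 1) := ⟨one_pos⟩

attribute [local instance] fact_zero_lt_one_real

instance : IsProbabilityMeasure (volume : Measure (AddCircle (1:ℝ))) :=
  ⟨by rw [AddCircle.measure_univ]; norm_num⟩

variable {d : ℕ}

lemma ind_nonneg (P : Prop) : 0 ≤ ind P := by unfold ind; split <;> norm_num

lemma ind_le_one (P : Prop) : ind P ≤ 1 := by unfold ind; split <;> norm_num

lemma ind_of {P : Prop} (h : P) : ind P = 1 := by simp [ind, h]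

lemma ind_of_not {P : Prop} (h : ¬ P) : ind P = 0 := by simp [ind, h]

lemma ind_and (P Q : Prop) : ind (P ∧ Q) = ind P * ind Q := by
  by_cases hP : P <;> by_cases hQ : Q <;> simp [ind, hP, hQ]

lemma ind_le_ind {P Q : Prop} (h : P → Q) : ind P ≤ ind Q := by
  by_cases hP : P
  · rw [ind_of hP, ind_of (h hP)]
  · rw [ind_of_not hP]; exact ind_nonneg Q

lemma one_sub_ind (P : Prop) : 1 - ind P = ind (¬ P) := by
  by_cases hP : P <;> simp [ind, hP]

lemma ind_forall {ι : Type*} [Fintype ι] (P : ι → Prop) :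
    ind (∀ i, P i) = ∏ i, ind (P i) := by
  by_cases h : ∀ i, P i
  · rw [ind_of h]
    exact (Finset.prod_eq_one fun i _ => ind_of (h i)).symm
  · rw [ind_of_not h]
    push_neg at h
    obtain ⟨i, hi⟩ := h
    exact (Finset.prod_eq_zero (Finset.mem_univ i) (ind_of_not hi)).symm

lemma measurable_ind {γ : Type*} [MeasurableSpace γ] {P : γ → Prop}
    (h : MeasurableSet {t | P t}) : Measurable fun t => ind (P t) := by
  have heq : (fun t => ind (P t)) = Set.indicator {t | P t} (fun _ => (1:ℝ)) := by
    funext t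
    by_cases ht : P t <;> simp [ind, ht, Set.indicator_apply]
  rw [heq]
  exact measurable_const.indicator h

lemma tdist_comm (x y : Torus d) : tdist x y = tdist y x := by
  simp [tdist, dist_comm]

lemma tdist_nonneg (x y : Torus d) : 0 ≤ tdist x y := Real.sqrt_nonneg _

lemma continuous_tdist : Continuous fun p : Torus d × Torus d => tdist p.1 p.2 := by
  unfold tdist
  apply Real.continuous_sqrt.comp
  apply continuous_finset_sum
  intro i _
  exact (((continuous_apply i).comp continuous_fst).dist
    ((continuous_apply i).comp continuous_snd)).pow 2

lemma measurable_tdist {γ : Type*} [MeasurableSpace γ] {f g : γ → Torus d}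
    (hf : Measurable f) (hg : Measurable g) :
    Measurable fun t => tdist (f t) (g t) := by
  unfold tdist
  have hsum : Measurable fun t => ∑ i, dist (f t i) (g t i) ^ 2 :=
    Finset.measurable_sum _ fun i _ =>
      (((measurable_pi_apply i).comp hf).dist ((measurable_pi_apply i).comp hg)).pow_const 2
  exact Real.continuous_sqrt.measurable.comp hsum

lemma measurable_ind_lt_tdist {γ : Type*} [MeasurableSpace γ] {f g : γ → Torus d}
    (hf : Measurable f) (hg : Measurable g) (ε : ℝ) :
    Measurable fun t => ind (ε < tdist (f t) (g t)) :=
  measurable_ind (measurableSet_lt measurable_const (measurable_tdist hf hg))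

lemma measurable_ind_tdist_le {γ : Type*} [MeasurableSpace γ] {f g : γ → Torus d}
    (hf : Measurable f) (hg : Measurable g) (ε : ℝ) :
    Measurable fun t => ind (tdist (f t) (g t) ≤ ε) :=
  measurable_ind (measurableSet_le (measurable_tdist hf hg) measurable_const)

lemma exclInd_eq_prod (ε : ℝ) {s : ℕ} (X : Fin s → Torus d) :
    exclInd d ε X = ∏ p ∈ Finset.univ.filter (fun p : Fin s × Fin s => p.1 < p.2),
      ind (ε < tdist (X p.1) (X p.2)) := by
  unfold exclInd
  by_cases h : ∀ i j : Fin s, i ≠ j → ε < tdist (X i) (X j)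
  · rw [ind_of h]
    refine (Finset.prod_eq_one fun p hp => ?_).symm
    rw [Finset.mem_filter] at hp
    exact ind_of (h p.1 p.2 (Fin.ne_of_lt hp.2))
  · rw [ind_of_not h]
    push_neg at h
    obtain ⟨i, j, hij, hnot⟩ := h
    rcases lt_or_gt_of_ne hij with hlt | hgt
    · exact (Finset.prod_eq_zero (i := (i, j))
        (by simp [Finset.mem_filter, hlt]) (ind_of_not (not_lt.mpr hnot))).symm
    · refine (Finset.prod_eq_zero (i := (j, i))
        (by simp [Finset.mem_filter, hgt]) (ind_of_not (not_lt.mpr ?_))).symm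
      rwa [tdist_comm]

lemma exclInd_nonneg (ε : ℝ) {s : ℕ} (X : Fin s → Torus d) : 0 ≤ exclInd d ε X :=
  ind_nonneg _

lemma exclInd_le_one (ε : ℝ) {s : ℕ} (X : Fin s → Torus d) : exclInd d ε X ≤ 1 :=
  ind_le_one _

lemma measurable_exclInd (ε : ℝ) {s : ℕ} :
    Measurable fun X : Fin s → Torus d => exclInd d ε X := by
  have : (fun X : Fin s → Torus d => exclInd d ε X)
      = fun X => ∏ p ∈ Finset.univ.filter (fun p : Fin s × Fin s => p.1 < p.2),
        ind (ε < tdist (X p.1) (X p.2)) := funext fun X => exclInd_eq_prod ε X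
  rw [this]
  exact Finset.measurable_prod _ fun p _ =>
    measurable_ind_lt_tdist (γ := Fin s → Torus d) (f := fun X => X p.1) (g := fun X => X p.2)
      (measurable_pi_apply _) (measurable_pi_apply _) ε

lemma exclInd_comp_le {s t : ℕ} (ε : ℝ) (f : Fin t → Fin s) (hf : Function.Injective f)
    (X : Fin s → Torus d) : exclInd d ε X ≤ exclInd d ε (X ∘ f) :=
  ind_le_ind fun h i j hij => h (f i) (f j) fun he => hij (hf he)


lemma extend_lt {α : Sort*} {s N : ℕ} (h : s ≤ N) (a : Fin s → α) (b : Fin (N-s) → α)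
    (i : Fin N) (hi : (i : ℕ) < s) : extend h a b i = a ⟨i, hi⟩ := dif_pos hi

lemma extend_ge {α : Sort*} {s N : ℕ} (h : s ≤ N) (a : Fin s → α) (b : Fin (N-s) → α)
    (i : Fin N) (hi : ¬ (i : ℕ) < s) : extend h a b i = b ⟨(i : ℕ) - s, by omega⟩ := dif_neg hi

lemma excl_extend {s N : ℕ} (h : s ≤ N) (ε : ℝ) (X : Fin s → Torus d)
    (Y : Fin (N-s) → Torus d) :
    exclInd d ε (extend h X Y) =
      exclInd d ε X * (∏ i : Fin s, ∏ j : Fin (N-s), ind (ε < tdist (X i) (Y j)))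
        * exclInd d ε Y := by
  unfold exclInd
  have key : (∀ i j : Fin N, i ≠ j → ε < tdist (extend h X Y i) (extend h X Y j)) ↔
      ((∀ i j : Fin s, i ≠ j → ε < tdist (X i) (X j)) ∧
        ((∀ i : Fin s, ∀ j : Fin (N-s), ε < tdist (X i) (Y j)) ∧
          (∀ i j : Fin (N-s), i ≠ j → ε < tdist (Y i) (Y j)))) := by
    constructor
    · intro H
      refine ⟨fun i j hij => ?_, fun i j => ?_, fun i j hij => ?_⟩
      · have hne : (⟨i.1, lt_of_lt_of_le i.isLt h⟩ : Fin N) ≠ ⟨j.1, lt_of_lt_of_le j.isLt h⟩ := by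
          simp only [ne_eq, Fin.mk.injEq]
          exact fun e => hij (Fin.ext e)
        have hH := H _ _ hne
        rwa [extend_lt h X Y _ i.isLt, extend_lt h X Y _ j.isLt, Fin.eta, Fin.eta] at hH
      · have hi : (i : ℕ) < N := lt_of_lt_of_le i.isLt h
        have hj : s + (j : ℕ) < N := by omega
        have hne : (⟨i.1, hi⟩ : Fin N) ≠ ⟨s + j.1, hj⟩ := by
          simp only [ne_eq, Fin.mk.injEq]; omega
        have hH := H _ _ hne
        rw [extend_lt h X Y _ i.isLt, Fin.eta, extend_ge h X Y _ (by simp)] at hH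
        have hjj : (⟨s + (j:ℕ) - s, by omega⟩ : Fin (N-s)) = j := Fin.ext (by simp)
        rwa [hjj] at hH
      · have hi : s + (i : ℕ) < N := by omega
        have hj : s + (j : ℕ) < N := by omega
        have hne : (⟨s + i.1, hi⟩ : Fin N) ≠ ⟨s + j.1, hj⟩ := by
          simp only [ne_eq, Fin.mk.injEq]
          intro e
          exact hij (Fin.ext (by omega))
        have hH := H _ _ hne
        rw [extend_ge h X Y _ (by simp), extend_ge h X Y _ (by simp)] at hH
        have hii : (⟨s + (i:ℕ) - s, by omega⟩ : Fin (N-s)) = i := Fin.ext (by simp)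
        have hjj : (⟨s + (j:ℕ) - s, by omega⟩ : Fin (N-s)) = j := Fin.ext (by simp)
        rwa [hii, hjj] at hH
    · rintro ⟨hA, hB, hC⟩ i j hij
      by_cases hi : (i : ℕ) < s <;> by_cases hj : (j : ℕ) < s
      · rw [extend_lt h X Y i hi, extend_lt h X Y j hj]
        refine hA _ _ fun e => hij (Fin.ext ?_)
        simpa using congrArg Fin.val e
      · rw [extend_lt h X Y i hi, extend_ge h X Y j hj]
        exact hB _ _
      · rw [extend_ge h X Y i hi, extend_lt h X Y j hj, tdist_comm]
        exact hB _ _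
      · rw [extend_ge h X Y i hi, extend_ge h X Y j hj]
        refine hC _ _ fun e => hij (Fin.ext ?_)
        have := congrArg Fin.val e
        simp only [] at this
        omega
  rw [congrArg ind (propext key), ind_and, ind_and]
  have hB : ind (∀ i : Fin s, ∀ j : Fin (N-s), ε < tdist (X i) (Y j))
      = ∏ i : Fin s, ∏ j : Fin (N-s), ind (ε < tdist (X i) (Y j)) := by
    rw [ind_forall]
    exact Finset.prod_congr rfl fun i _ => ind_forall _
  rw [hB]; ring

lemma prod_extend {α : Type*} {s N : ℕ} (h : s ≤ N) (a : Fin s → α) (b : Fin (N-s) → α)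
    (f : α → ℝ) :
    ∏ i : Fin N, f (extend h a b i) = (∏ i, f (a i)) * ∏ j, f (b j) := by
  have hN : s + (N - s) = N := by omega
  rw [← Fintype.prod_equiv (finCongr hN) (fun i => f (extend h a b (finCongr hN i)))
    (fun i => f (extend h a b i)) (fun i => rfl)]
  rw [Fin.prod_univ_add]
  congr 1
  · refine Finset.prod_congr rfl fun i _ => ?_
    have hv : ((finCongr hN (Fin.castAdd (N - s) i)) : ℕ) < s := by
      simp [Fin.coe_cast]
    rw [extend_lt h a b _ hv]
    exact congrArg f (congrArg a (Fin.ext (by simp [Fin.coe_cast])))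
  · refine Finset.prod_congr rfl fun i _ => ?_
    have hv : ¬ ((finCongr hN (Fin.natAdd s i)) : ℕ) < s := by
      simp [Fin.coe_cast]
    rw [extend_ge h a b _ hv]
    exact congrArg f (congrArg b (Fin.ext (by simp [Fin.coe_cast])))

lemma maxwellian_nonneg {β : ℝ} (hβ : 0 < β) (v : Vel d) : 0 ≤ Maxwellian d β v := by
  unfold Maxwellian
  have hπ := Real.pi_pos
  positivity

lemma integral_maxwellian {β : ℝ} (hβ : 0 < β) : ∫ v : Vel d, Maxwellian d β v = 1 := by
  unfold Maxwellian
  rw [MeasureTheory.integral_const_mul]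
  have h2 : (0:ℝ) < β / 2 := by linarith
  have hg := GaussianFourier.integral_rexp_neg_mul_sq_norm (V := Vel d) h2
  rw [finrank_euclideanSpace_fin] at hg
  rw [hg, ← Real.mul_rpow (by positivity) (by positivity)]
  have hπ := Real.pi_pos
  rw [show β / (2 * π) * (π / (β / 2)) = 1 by field_simp]
  exact Real.one_rpow _

lemma integral_prod_maxwellian {β : ℝ} (hβ : 0 < β) (m : ℕ) :
    ∫ W : Fin m → Vel d, ∏ j, Maxwellian d β (W j) = 1 := by
  rw [MeasureTheory.integral_fintype_prod_volume_eq_pow (ι := Fin m) (Maxwellian d β),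
    integral_maxwellian hβ, one_pow]

end HSAux

namespace HSAux

variable {d : ℕ}

lemma ballVol_nonneg (d : ℕ) : 0 ≤ ballVol d := ENNReal.toReal_nonneg

lemma pi_restrict (I : Set ℝ) (hI : MeasurableSet I) :
    Measure.pi (fun _ : Fin d => (volume : Measure ℝ).restrict I)
      = (volume : Measure (Fin d → ℝ)).restrict (Set.univ.pi fun _ => I) := by
  rw [MeasureTheory.volume_pi]
  refine Measure.pi_eq fun t ht => ?_
  rw [Measure.restrict_apply (MeasurableSet.univ_pi ht), ← Set.pi_inter_distrib,
    Measure.pi_pi]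
  exact Finset.prod_congr rfl fun i _ => (Measure.restrict_apply (ht i)).symm

lemma norm_coe_addCircle {r : ℝ} (hr : r ∈ Set.Ioc (-(1/2) : ℝ) (1/2)) :
    ‖(r : AddCircle (1 : ℝ))‖ = |r| := by
  rw [AddCircle.norm_eq]
  have hsimp : (1:ℝ)⁻¹ * r = r := by norm_num
  rw [hsimp]
  rcases eq_or_lt_of_le hr.2 with heq | hlt
  · subst heq
    rw [show (1:ℝ)/2 = 2⁻¹ by norm_num, round_two_inv]
    rw [show (2⁻¹ : ℝ) - ((1:ℤ):ℝ) * 1 = -2⁻¹ by norm_num, abs_neg]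
  · have h0 : round r = 0 := by
      rw [round_eq_zero_iff]
      exact ⟨le_of_lt hr.1, hlt⟩
    simp [h0]

lemma measure_tdist_ball_le {ε : ℝ} (hε : 0 ≤ ε) (x : Torus d) :
    (volume {y : Torus d | tdist x y ≤ ε}).toReal ≤ ε ^ d * ballVol d := by
  classical
  set S : Set (Torus d) := {y | tdist x y ≤ ε} with hSdef
  have hmeasS : MeasurableSet S :=
    measurableSet_le (measurable_tdist measurable_const measurable_id) measurable_const
  set I : Set ℝ := Set.Ioc (-(1/2) : ℝ) (1/2) with hIdef
  set Q : (Fin d → ℝ) → Torus d := fun t i => x i + (t i : AddCircle (1:ℝ)) with hQdef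
  have hQ1 : ∀ i : Fin d, MeasurePreserving (fun r : ℝ => x i + (r : AddCircle (1:ℝ)))
      (volume.restrict I) volume := by
    intro i
    have h1 := AddCircle.measurePreserving_mk 1 (-(1/2))
    have h2 : (-(1/2) : ℝ) + 1 = 1/2 := by norm_num
    rw [h2] at h1
    exact (measurePreserving_add_left volume (x i)).comp h1
  have hQ : MeasurePreserving Q (Measure.pi fun _ : Fin d => volume.restrict I)
      (volume : Measure (Torus d)) := by
    have hmp := measurePreserving_pi (fun _ : Fin d => (volume : Measure ℝ).restrict I)
      (fun _ : Fin d => (volume : Measure (AddCircle (1:ℝ)))) hQ1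
    rw [MeasureTheory.volume_pi]
    exact hmp
  have key : volume S = (Measure.pi fun _ : Fin d => volume.restrict I) (Q ⁻¹' S) :=
    (hQ.measure_preimage hmeasS.nullMeasurableSet).symm
  rw [pi_restrict I measurableSet_Ioc,
    Measure.restrict_apply (hQ.measurable hmeasS)] at key
  set B : Set (Fin d → ℝ) := {t | ∑ i, t i ^ 2 ≤ ε ^ 2} with hBdef
  have hmeasB : MeasurableSet B := by
    refine measurableSet_le ?_ measurable_const
    exact Finset.measurable_sum _ fun i _ => (measurable_pi_apply i).pow_const 2
  have hsub : (Q ⁻¹' S) ∩ (Set.univ.pi fun _ => I) ⊆ B := by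
    rintro t ⟨htS, htI⟩
    have hbox : ∀ i, t i ∈ I := fun i => htI i (Set.mem_univ i)
    have htd : tdist x (Q t) = Real.sqrt (∑ i, t i ^ 2) := by
      unfold tdist
      congr 1
      refine Finset.sum_congr rfl fun i _ => ?_
      rw [hQdef]
      rw [dist_self_add_right, norm_coe_addCircle (hbox i), sq_abs]
    have h1 : Real.sqrt (∑ i, t i ^ 2) ≤ ε := by
      have := htS
      rw [Set.mem_preimage, hSdef, Set.mem_setOf_eq, htd] at this
      exact this
    have h2 : (0:ℝ) ≤ ∑ i, t i ^ 2 := Finset.sum_nonneg fun i _ => sq_nonneg _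
    calc ∑ i, t i ^ 2 = Real.sqrt (∑ i, t i ^ 2) ^ 2 := (Real.sq_sqrt h2).symm
      _ ≤ ε ^ 2 := by
          have := pow_le_pow_left₀ (Real.sqrt_nonneg _) h1 2
          exact this
  have hbound1 : volume S ≤ volume B := by
    rw [key]
    exact measure_mono hsub
  have hBvol : volume B = volume ((MeasurableEquiv.toLp 2 (Fin d → ℝ)).symm ⁻¹' B) :=
    ((EuclideanSpace.volume_preserving_symm_measurableEquiv_toLp (Fin d)).measure_preimage
      hmeasB.nullMeasurableSet).symm
  have hsub2 : (MeasurableEquiv.toLp 2 (Fin d → ℝ)).symm ⁻¹' B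
      ⊆ Metric.closedBall (0 : Vel d) ε := by
    intro v hv
    rw [Set.mem_preimage, hBdef, Set.mem_setOf_eq] at hv
    have hvv : ∑ i, ((MeasurableEquiv.toLp 2 (Fin d → ℝ)).symm v) i ^ 2 = ∑ i, v i ^ 2 := by
      refine Finset.sum_congr rfl fun i _ => ?_
      rfl
    rw [hvv] at hv
    rw [Metric.mem_closedBall, dist_zero_right]
    have hnorm : ‖v‖ = Real.sqrt (∑ i, v i ^ 2) := by
      rw [EuclideanSpace.norm_eq]
      congr 1
      exact Finset.sum_congr rfl fun i _ => by rw [Real.norm_eq_abs, sq_abs]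
    rw [hnorm]
    calc Real.sqrt (∑ i, v i ^ 2) ≤ Real.sqrt (ε ^ 2) := Real.sqrt_le_sqrt hv
      _ = ε := by rw [Real.sqrt_sq hε]
  have hball : volume (Metric.closedBall (0 : Vel d) ε)
      = ENNReal.ofReal (ε ^ d) * volume (Metric.ball (0 : Vel d) 1) := by
    rw [Measure.addHaar_closedBall volume (0 : Vel d) hε, finrank_euclideanSpace_fin]
  have hchain : volume S ≤ ENNReal.ofReal (ε ^ d) * volume (Metric.ball (0 : Vel d) 1) := by
    calc volume S ≤ volume B := hbound1
      _ = volume ((MeasurableEquiv.toLp 2 (Fin d → ℝ)).symm ⁻¹' B) := hBvol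
      _ ≤ volume (Metric.closedBall (0 : Vel d) ε) := measure_mono hsub2
      _ = _ := hball
  have hne : ENNReal.ofReal (ε ^ d) * volume (Metric.ball (0 : Vel d) 1) ≠ ⊤ :=
    ENNReal.mul_ne_top ENNReal.ofReal_ne_top measure_ball_lt_top.ne
  calc (volume S).toReal ≤ (ENNReal.ofReal (ε ^ d) * volume (Metric.ball (0 : Vel d) 1)).toReal :=
        ENNReal.toReal_mono hne hchain
    _ = ε ^ d * ballVol d := by
        rw [ENNReal.toReal_mul, ENNReal.toReal_ofReal (by positivity)]
        rfl

lemma integral_ind_ball_le {ε : ℝ} (hε : 0 ≤ ε) (x : Torus d) :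
    ∫ y : Torus d, ind (tdist x y ≤ ε) ≤ ε ^ d * ballVol d := by
  have hmeasS : MeasurableSet {y : Torus d | tdist x y ≤ ε} :=
    measurableSet_le (measurable_tdist measurable_const measurable_id) measurable_const
  have heq : (fun y : Torus d => ind (tdist x y ≤ ε))
      = Set.indicator {y : Torus d | tdist x y ≤ ε} 1 := by
    funext y
    by_cases h : tdist x y ≤ ε <;> simp [ind, h, Set.indicator_apply]
  rw [heq, MeasureTheory.integral_indicator_one hmeasS]
  exact measure_tdist_ball_le hε x

end HSAux

namespace HSAux

variable {d : ℕ}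

instance {A B : Type*} [MeasureSpace A] [MeasureSpace B]
    [IsProbabilityMeasure (volume : Measure A)] [IsProbabilityMeasure (volume : Measure B)] :
    IsProbabilityMeasure (volume : Measure (A × B)) :=
  ⟨by rw [MeasureTheory.Measure.volume_eq_prod]; exact measure_univ⟩

lemma integrable_bdd {γ : Type*} [MeasureSpace γ] [IsFiniteMeasure (volume : Measure γ)]
    {f : γ → ℝ} {C : ℝ} (hm : Measurable f) (h1 : ∀ x, |f x| ≤ C) :
    Integrable f := by
  refine (integrable_const (C:ℝ)).mono' hm.aestronglyMeasurable ?_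
  exact Filter.Eventually.of_forall fun x => by rw [Real.norm_eq_abs]; exact h1 x

lemma abs_le_one_of_unit {x : ℝ} (h0 : 0 ≤ x) (h1 : x ≤ 1) : |x| ≤ 1 := by
  rw [abs_of_nonneg h0]; exact h1

lemma ind_le_eq_not_lt (a b : ℝ) : ind (a ≤ b) = ind (¬ b < a) :=
  congrArg ind (propext not_lt.symm)

lemma one_sub_sum_le_prod_ind {ι : Type*} (F : Finset ι) (P : ι → Prop) :
    1 - ∑ i ∈ F, ind (¬ P i) ≤ ∏ i ∈ F, ind (P i) := by
  classical
  induction F using Finset.cons_induction with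
  | empty => simp
  | cons a F ha ih =>
    rw [Finset.prod_cons, Finset.sum_cons]
    by_cases hP : P a
    · rw [ind_of hP, one_mul, ind_of_not (not_not_intro hP)]
      linarith
    · rw [ind_of_not hP, zero_mul, ind_of hP]
      have h1 : 0 ≤ ∑ i ∈ F, ind (¬ P i) := Finset.sum_nonneg fun i _ => ind_nonneg _
      linarith

lemma Zpart_eq (ε : ℝ) (k : ℕ) : Zpart d ε k = ∫ X : Fin k → Torus d, exclInd d ε X := by
  unfold Zpart
  exact integral_congr_ae (Filter.Eventually.of_forall fun X => (exclInd_eq_prod ε X).symm)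

lemma Zpart_nonneg (ε : ℝ) (k : ℕ) : 0 ≤ Zpart d ε k := by
  rw [Zpart_eq]
  exact integral_nonneg fun X => exclInd_nonneg ε X

lemma Zpart_zero (ε : ℝ) : Zpart d ε 0 = 1 := by
  rw [Zpart_eq]
  have h : ∀ X : Fin 0 → Torus d, exclInd d ε X = 1 := fun X =>
    ind_of (fun i _ _ => absurd i.isLt (by omega))
  rw [integral_congr_ae (Filter.Eventually.of_forall fun X => h X)]
  simp

lemma excl_insertNth (ε : ℝ) {k : ℕ} (y : Torus d) (X : Fin k → Torus d) :
    exclInd d ε (Fin.insertNth (α := fun _ : Fin (k+1) => Torus d) (Fin.last k) y X) =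
      exclInd d ε X * ∏ i : Fin k, ind (ε < tdist (X i) y) := by
  unfold exclInd
  set W := Fin.insertNth (α := fun _ : Fin (k+1) => Torus d) (Fin.last k) y X with hW
  have hWlast : W (Fin.last k) = y := Fin.insertNth_apply_same _ _ _
  have hWcast : ∀ i : Fin k, W (Fin.castSucc i) = X i := by
    intro i
    have h1 : Fin.castSucc i = (Fin.last k).succAbove i := by rw [Fin.succAbove_last]
    rw [hW, h1, Fin.insertNth_apply_succAbove]
  have key : (∀ i j : Fin (k+1), i ≠ j → ε < tdist (W i) (W j)) ↔
      ((∀ i j : Fin k, i ≠ j → ε < tdist (X i) (X j)) ∧ ∀ i : Fin k, ε < tdist (X i) y) := by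
    constructor
    · intro H
      constructor
      · intro i j hij
        have hc := H (Fin.castSucc i) (Fin.castSucc j)
          (fun e => hij (Fin.castSucc_injective _ e))
        rwa [hWcast, hWcast] at hc
      · intro i
        have hc := H (Fin.castSucc i) (Fin.last k) (Fin.castSucc_lt_last i).ne
        rwa [hWcast, hWlast] at hc
    · rintro ⟨hA, hB⟩ i j hij
      rcases Fin.eq_castSucc_or_eq_last i with ⟨i', rfl⟩ | rfl <;>
        rcases Fin.eq_castSucc_or_eq_last j with ⟨j', rfl⟩ | rfl
      · rw [hWcast, hWcast]
        exact hA _ _ (fun e => hij (congrArg Fin.castSucc e))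
      · rw [hWcast, hWlast]
        exact hB _
      · rw [hWlast, hWcast, tdist_comm]
        exact hB _
      · exact absurd rfl hij
  rw [congrArg ind (propext key), ind_and]
  congr 1
  exact ind_forall _

lemma measurable_pairfactor (ε : ℝ) {k : ℕ} (i : Fin k) :
    Measurable fun p : Torus d × (Fin k → Torus d) => ind (ε < tdist (p.2 i) p.1) :=
  measurable_ind_lt_tdist (γ := Torus d × (Fin k → Torus d))
    (f := fun p => p.2 i) (g := fun p => p.1)
    ((measurable_pi_apply i).comp measurable_snd) measurable_fst ε

lemma measurable_pairfactor_le (ε : ℝ) {k : ℕ} (i : Fin k) :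
    Measurable fun p : Torus d × (Fin k → Torus d) => ind (tdist (p.2 i) p.1 ≤ ε) :=
  measurable_ind_tdist_le (γ := Torus d × (Fin k → Torus d))
    (f := fun p => p.2 i) (g := fun p => p.1)
    ((measurable_pi_apply i).comp measurable_snd) measurable_fst ε

lemma Zpart_succ (ε : ℝ) (k : ℕ) :
    Zpart d ε (k+1) = ∫ p : Torus d × (Fin k → Torus d),
      exclInd d ε p.2 * ∏ i : Fin k, ind (ε < tdist (p.2 i) p.1) := by
  rw [Zpart_eq]
  have h := (volume_preserving_piFinSuccAbove (fun _ : Fin (k+1) => Torus d) (Fin.last k)).symm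
  rw [← h.integral_comp']
  refine integral_congr_ae (Filter.Eventually.of_forall fun p => ?_)
  have hsymm : (MeasurableEquiv.piFinSuccAbove (fun _ : Fin (k+1) => Torus d) (Fin.last k)).symm p
      = Fin.insertNth (α := fun _ : Fin (k+1) => Torus d) (Fin.last k) p.1 p.2 := rfl
  show exclInd d ε ((MeasurableEquiv.piFinSuccAbove (fun _ : Fin (k+1) => Torus d)
    (Fin.last k)).symm p) = _
  rw [hsymm, excl_insertNth]

lemma integrable_f2 (ε : ℝ) (k : ℕ) :
    Integrable (fun p : Torus d × (Fin k → Torus d) =>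
      exclInd d ε p.2 * ∏ i : Fin k, ind (ε < tdist (p.2 i) p.1)) := by
  refine integrable_bdd (C := 1) ?_ ?_
  · exact ((measurable_exclInd ε).comp measurable_snd).mul
      (Finset.measurable_prod _ fun i _ => measurable_pairfactor ε i)
  · intro p
    refine abs_le_one_of_unit ?_ ?_
    · exact mul_nonneg (exclInd_nonneg _ _) (Finset.prod_nonneg fun i _ => ind_nonneg _)
    · exact mul_le_one₀ (exclInd_le_one _ _) (Finset.prod_nonneg fun i _ => ind_nonneg _)
        (Finset.prod_le_one (fun i _ => ind_nonneg _) (fun i _ => ind_le_one _))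

lemma integrable_f1 (ε : ℝ) (k : ℕ) :
    Integrable (fun p : Torus d × (Fin k → Torus d) => exclInd d ε p.2) := by
  refine integrable_bdd (C := 1) ((measurable_exclInd ε).comp measurable_snd) fun p =>
    abs_le_one_of_unit (exclInd_nonneg _ _) (exclInd_le_one _ _)

lemma integrable_f3 (ε : ℝ) (k : ℕ) (i : Fin k) :
    Integrable (fun p : Torus d × (Fin k → Torus d) =>
      exclInd d ε p.2 * ind (tdist (p.2 i) p.1 ≤ ε)) := by
  refine integrable_bdd (C := 1) ?_ ?_
  · exact ((measurable_exclInd ε).comp measurable_snd).mul (measurable_pairfactor_le ε i)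
  · intro p
    refine abs_le_one_of_unit (mul_nonneg (exclInd_nonneg _ _) (ind_nonneg _)) ?_
    exact mul_le_one₀ (exclInd_le_one _ _) (ind_nonneg _) (ind_le_one _)

lemma prod_snd_integral (ε : ℝ) (k : ℕ) :
    ∫ p : Torus d × (Fin k → Torus d), exclInd d ε p.2 = Zpart d ε k := by
  rw [MeasureTheory.Measure.volume_eq_prod]
  have h1 : ∀ p : Torus d × (Fin k → Torus d),
      exclInd d ε p.2 = (fun _ : Torus d => (1:ℝ)) p.1 * exclInd d ε p.2 := by simp
  rw [integral_congr_ae (Filter.Eventually.of_forall h1),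
    MeasureTheory.integral_prod_mul (fun _ : Torus d => (1:ℝ)) (fun X => exclInd d ε X)]
  rw [Zpart_eq]
  simp

lemma Zpart_succ_le (ε : ℝ) (k : ℕ) : Zpart d ε (k+1) ≤ Zpart d ε k := by
  rw [Zpart_succ]
  rw [← prod_snd_integral ε k]
  refine integral_mono (integrable_f2 ε k) (integrable_f1 ε k) fun p => ?_
  calc exclInd d ε p.2 * ∏ i : Fin k, ind (ε < tdist (p.2 i) p.1)
      ≤ exclInd d ε p.2 * 1 := by
        refine mul_le_mul_of_nonneg_left ?_ (exclInd_nonneg _ _)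
        exact Finset.prod_le_one (fun i _ => ind_nonneg _) (fun i _ => ind_le_one _)
    _ = exclInd d ε p.2 := mul_one _

lemma term_bound {ε : ℝ} (hε : 0 ≤ ε) (k : ℕ) (i : Fin k) :
    ∫ p : Torus d × (Fin k → Torus d), exclInd d ε p.2 * ind (tdist (p.2 i) p.1 ≤ ε)
      ≤ (ε ^ d * ballVol d) * Zpart d ε k := by
  have ha : 0 ≤ ε ^ d * ballVol d := mul_nonneg (pow_nonneg hε d) (ballVol_nonneg d)
  have hint := integrable_f3 (d := d) ε k i
  rw [MeasureTheory.Measure.volume_eq_prod] at hint ⊢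
  rw [MeasureTheory.integral_prod_symm _ hint]
  have hinner : ∀ X : Fin k → Torus d,
      (∫ y : Torus d, exclInd d ε X * ind (tdist (X i) y ≤ ε))
        = exclInd d ε X * ∫ y : Torus d, ind (tdist (X i) y ≤ ε) :=
    fun X => MeasureTheory.integral_const_mul _ _
  calc (∫ X : Fin k → Torus d, ∫ y : Torus d, exclInd d ε X * ind (tdist (X i) y ≤ ε))
      = ∫ X : Fin k → Torus d, exclInd d ε X * ∫ y : Torus d, ind (tdist (X i) y ≤ ε) :=
        integral_congr_ae (Filter.Eventually.of_forall fun X => hinner X)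
    _ ≤ ∫ X : Fin k → Torus d, exclInd d ε X * (ε ^ d * ballVol d) := by
        refine integral_mono_of_nonneg (Filter.Eventually.of_forall fun X => ?_) ?_
          (Filter.Eventually.of_forall fun X => ?_)
        · exact mul_nonneg (exclInd_nonneg _ _) (integral_nonneg fun y => ind_nonneg _)
        · refine integrable_bdd (C := ε ^ d * ballVol d) ?_ ?_
          · exact (measurable_exclInd ε).mul_const _
          · intro X
            rw [abs_of_nonneg (mul_nonneg (exclInd_nonneg _ _) ha)]
            calc exclInd d ε X * (ε ^ d * ballVol d) ≤ 1 * (ε ^ d * ballVol d) :=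
                  mul_le_mul_of_nonneg_right (exclInd_le_one _ _) ha
              _ = ε ^ d * ballVol d := one_mul _
        · refine mul_le_mul_of_nonneg_left ?_ (exclInd_nonneg _ _)
          exact integral_ind_ball_le hε (X i)
    _ = (ε ^ d * ballVol d) * Zpart d ε k := by
        rw [MeasureTheory.integral_mul_const, Zpart_eq, mul_comm]

lemma Zpart_succ_ge {ε : ℝ} (hε : 0 ≤ ε) (k : ℕ) :
    (1 - k * (ε ^ d * ballVol d)) * Zpart d ε k ≤ Zpart d ε (k + 1) := by
  set a := ε ^ d * ballVol d with ha
  rw [Zpart_succ]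
  have hpt : ∀ p : Torus d × (Fin k → Torus d),
      exclInd d ε p.2 - ∑ i : Fin k, exclInd d ε p.2 * ind (tdist (p.2 i) p.1 ≤ ε)
        ≤ exclInd d ε p.2 * ∏ i : Fin k, ind (ε < tdist (p.2 i) p.1) := by
    intro p
    have h1 : 1 - ∑ i : Fin k, ind (¬ (ε < tdist (p.2 i) p.1))
        ≤ ∏ i : Fin k, ind (ε < tdist (p.2 i) p.1) :=
      one_sub_sum_le_prod_ind _ _
    have h2 : exclInd d ε p.2 * (1 - ∑ i : Fin k, ind (¬ (ε < tdist (p.2 i) p.1)))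
        ≤ exclInd d ε p.2 * ∏ i : Fin k, ind (ε < tdist (p.2 i) p.1) :=
      mul_le_mul_of_nonneg_left h1 (exclInd_nonneg _ _)
    calc exclInd d ε p.2 - ∑ i : Fin k, exclInd d ε p.2 * ind (tdist (p.2 i) p.1 ≤ ε)
        = exclInd d ε p.2 * (1 - ∑ i : Fin k, ind (¬ (ε < tdist (p.2 i) p.1))) := by
          rw [mul_sub, mul_one, Finset.mul_sum]
          congr 1
          refine Finset.sum_congr rfl fun i _ => ?_
          rw [ind_le_eq_not_lt]
      _ ≤ _ := h2
  have hintsum : Integrable (fun p : Torus d × (Fin k → Torus d) =>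
      ∑ i : Fin k, exclInd d ε p.2 * ind (tdist (p.2 i) p.1 ≤ ε)) :=
    integrable_finset_sum _ fun i _ => integrable_f3 ε k i
  have key : (∫ p : Torus d × (Fin k → Torus d),
      (exclInd d ε p.2 - ∑ i : Fin k, exclInd d ε p.2 * ind (tdist (p.2 i) p.1 ≤ ε)))
      ≤ ∫ p : Torus d × (Fin k → Torus d),
        exclInd d ε p.2 * ∏ i : Fin k, ind (ε < tdist (p.2 i) p.1) :=
    integral_mono ((integrable_f1 ε k).sub hintsum) (integrable_f2 ε k) hpt
  refine le_trans ?_ key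
  rw [MeasureTheory.integral_sub (integrable_f1 ε k) hintsum,
    MeasureTheory.integral_finset_sum _ (fun i _ => integrable_f3 ε k i),
    prod_snd_integral ε k]
  have hsum : ∑ i : Fin k, ∫ p : Torus d × (Fin k → Torus d),
      exclInd d ε p.2 * ind (tdist (p.2 i) p.1 ≤ ε) ≤ k * (a * Zpart d ε k) := by
    calc ∑ i : Fin k, ∫ p : Torus d × (Fin k → Torus d),
        exclInd d ε p.2 * ind (tdist (p.2 i) p.1 ≤ ε)
        ≤ ∑ _i : Fin k, a * Zpart d ε k :=
          Finset.sum_le_sum fun i _ => term_bound hε k i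
      _ = k * (a * Zpart d ε k) := by rw [Finset.sum_const, Finset.card_univ,
          Fintype.card_fin, nsmul_eq_mul]
  nlinarith [Zpart_nonneg (d := d) ε k]

end HSAux

namespace HSAux

variable {d : ℕ}

lemma Zpart_anti (ε : ℝ) (m t : ℕ) : Zpart d ε (m + t) ≤ Zpart d ε m := by
  induction t with
  | zero => exact le_refl _
  | succ t ih => exact le_trans (Zpart_succ_le ε (m + t)) ih

lemma Zpart_chain_ge {ε : ℝ} (hε : 0 ≤ ε) (N m : ℕ)
    (hA : (N:ℝ) * (ε ^ d * ballVol d) ≤ 1) (t : ℕ) :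
    m + t ≤ N →
      (1 - (N:ℝ) * (ε ^ d * ballVol d)) ^ t * Zpart d ε m ≤ Zpart d ε (m + t) := by
  set a := ε ^ d * ballVol d with hadef
  have ha : 0 ≤ a := mul_nonneg (pow_nonneg hε d) (ballVol_nonneg d)
  induction t with
  | zero => intro _; simp
  | succ t ih =>
    intro h
    have h1 : m + t ≤ N := by omega
    have ih' := ih h1
    have hstep := Zpart_succ_ge (d := d) hε (m + t)
    have hcast : ((m + t : ℕ) : ℝ) * a ≤ (N:ℝ) * a := by
      refine mul_le_mul_of_nonneg_right ?_ ha
      exact Nat.cast_le.mpr (by omega : m + t ≤ N)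
    have hmono : (1 - (N:ℝ) * a) * Zpart d ε (m + t)
        ≤ (1 - ((m + t : ℕ) : ℝ) * a) * Zpart d ε (m + t) := by
      refine mul_le_mul_of_nonneg_right (by linarith) (Zpart_nonneg ε (m + t))
    have hAnn : 0 ≤ 1 - (N:ℝ) * a := by linarith
    calc (1 - (N:ℝ) * a) ^ (t+1) * Zpart d ε m
        = (1 - (N:ℝ) * a) * ((1 - (N:ℝ) * a) ^ t * Zpart d ε m) := by ring
      _ ≤ (1 - (N:ℝ) * a) * Zpart d ε (m + t) := by
          exact mul_le_mul_of_nonneg_left ih' hAnn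
      _ ≤ (1 - ((m + t : ℕ) : ℝ) * a) * Zpart d ε (m + t) := hmono
      _ ≤ Zpart d ε (m + t + 1) := by
          have hthis := hstep
          rw [← hadef] at hthis
          exact hthis
      _ = Zpart d ε (m + (t + 1)) := by rw [Nat.add_assoc]

lemma Zpart_pos {ε : ℝ} (hε : 0 ≤ ε) (N : ℕ)
    (hA : (N:ℝ) * (ε ^ d * ballVol d) ≤ 1/2) : 0 < Zpart d ε N := by
  have h := Zpart_chain_ge (d := d) hε N 0 (by linarith) N (by omega)
  rw [Zpart_zero, mul_one] at h
  have hpos : (0:ℝ) < (1 - (N:ℝ) * (ε ^ d * ballVol d)) ^ N := by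
    have : (0:ℝ) < 1 - (N:ℝ) * (ε ^ d * ballVol d) := by linarith
    positivity
  calc (0:ℝ) < (1 - (N:ℝ) * (ε ^ d * ballVol d)) ^ N := hpos
    _ ≤ Zpart d ε (0 + N) := h
    _ = Zpart d ε N := by rw [Nat.zero_add]

lemma measurable_psi (ε : ℝ) (s m : ℕ) (X : Fin s → Torus d) :
    Measurable fun Y : Fin m → Torus d =>
      (∏ i : Fin s, ∏ j : Fin m, ind (ε < tdist (X i) (Y j))) * exclInd d ε Y := by
  refine Measurable.mul ?_ (measurable_exclInd ε)
  refine Finset.measurable_prod _ fun i _ => Finset.measurable_prod _ fun j _ => ?_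
  exact measurable_ind_lt_tdist (γ := Fin m → Torus d) (f := fun _ => X i)
    (g := fun Y => Y j) measurable_const (measurable_pi_apply j) ε

lemma psi_unit (ε : ℝ) {s m : ℕ} (X : Fin s → Torus d) (Y : Fin m → Torus d) :
    0 ≤ (∏ i : Fin s, ∏ j : Fin m, ind (ε < tdist (X i) (Y j))) * exclInd d ε Y ∧
    (∏ i : Fin s, ∏ j : Fin m, ind (ε < tdist (X i) (Y j))) * exclInd d ε Y ≤ 1 := by
  have h0 : 0 ≤ ∏ i : Fin s, ∏ j : Fin m, ind (ε < tdist (X i) (Y j)) :=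
    Finset.prod_nonneg fun i _ => Finset.prod_nonneg fun j _ => ind_nonneg _
  have h1 : (∏ i : Fin s, ∏ j : Fin m, ind (ε < tdist (X i) (Y j))) ≤ 1 :=
    Finset.prod_le_one (fun i _ => Finset.prod_nonneg fun j _ => ind_nonneg _)
      (fun i _ => Finset.prod_le_one (fun j _ => ind_nonneg _) (fun j _ => ind_le_one _))
  constructor
  · exact mul_nonneg h0 (exclInd_nonneg _ _)
  · exact mul_le_one₀ h1 (exclInd_nonneg _ _) (exclInd_le_one _ _)

lemma integrable_psi (ε : ℝ) (s m : ℕ) (X : Fin s → Torus d) :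
    Integrable (fun Y : Fin m → Torus d =>
      (∏ i : Fin s, ∏ j : Fin m, ind (ε < tdist (X i) (Y j))) * exclInd d ε Y) :=
  integrable_bdd (C := 1) (measurable_psi ε s m X) fun Y =>
    abs_le_one_of_unit (psi_unit ε X Y).1 (psi_unit ε X Y).2

lemma integrable_exclInd (ε : ℝ) (m : ℕ) :
    Integrable (fun Y : Fin m → Torus d => exclInd d ε Y) :=
  integrable_bdd (C := 1) (measurable_exclInd ε) fun Y =>
    abs_le_one_of_unit (exclInd_nonneg _ _) (exclInd_le_one _ _)

lemma Phi_le (ε : ℝ) (s m : ℕ) (X : Fin s → Torus d) :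
    (∫ Y : Fin m → Torus d,
      (∏ i : Fin s, ∏ j : Fin m, ind (ε < tdist (X i) (Y j))) * exclInd d ε Y)
      ≤ Zpart d ε m := by
  rw [Zpart_eq]
  refine integral_mono (integrable_psi ε s m X) (integrable_exclInd ε m) fun Y => ?_
  have h1 : (∏ i : Fin s, ∏ j : Fin m, ind (ε < tdist (X i) (Y j))) ≤ 1 :=
    Finset.prod_le_one (fun i _ => Finset.prod_nonneg fun j _ => ind_nonneg _)
      (fun i _ => Finset.prod_le_one (fun j _ => ind_nonneg _) (fun j _ => ind_le_one _))
  calc (∏ i : Fin s, ∏ j : Fin m, ind (ε < tdist (X i) (Y j))) * exclInd d ε Y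
      ≤ 1 * exclInd d ε Y := mul_le_mul_of_nonneg_right h1 (exclInd_nonneg _ _)
    _ = exclInd d ε Y := one_mul _

lemma Phi_nonneg (ε : ℝ) (s m : ℕ) (X : Fin s → Torus d) :
    0 ≤ ∫ Y : Fin m → Torus d,
      (∏ i : Fin s, ∏ j : Fin m, ind (ε < tdist (X i) (Y j))) * exclInd d ε Y :=
  integral_nonneg fun Y => (psi_unit ε X Y).1

lemma integrable_term (ε : ℝ) {m : ℕ} (x : Torus d) (j : Fin m) :
    Integrable (fun Y : Fin m → Torus d => ind (tdist x (Y j) ≤ ε) * exclInd d ε Y) := by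
  refine integrable_bdd (C := 1) ?_ fun Y => ?_
  · exact (measurable_ind_tdist_le (γ := Fin m → Torus d) (f := fun _ => x)
      (g := fun Y => Y j) measurable_const (measurable_pi_apply j) ε).mul
      (measurable_exclInd ε)
  · exact abs_le_one_of_unit (mul_nonneg (ind_nonneg _) (exclInd_nonneg _ _))
      (mul_le_one₀ (ind_le_one _) (exclInd_nonneg _ _) (exclInd_le_one _ _))

lemma psi_term_bound {ε : ℝ} (hε : 0 ≤ ε) {m : ℕ} (x : Torus d) (j : Fin m) :
    ∫ Y : Fin m → Torus d, ind (tdist x (Y j) ≤ ε) * exclInd d ε Y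
      ≤ (ε ^ d * ballVol d) * Zpart d ε (m - 1) := by
  cases m with
  | zero => exact absurd j.isLt (by omega)
  | succ m' =>
    have hle : ∀ Y : Fin (m'+1) → Torus d, ind (tdist x (Y j) ≤ ε) * exclInd d ε Y
        ≤ ind (tdist x (Y j) ≤ ε) * exclInd d ε (Y ∘ j.succAbove) := fun Y =>
      mul_le_mul_of_nonneg_left
        (exclInd_comp_le ε j.succAbove (Fin.succAbove_right_injective) Y) (ind_nonneg _)
    have hint2 : Integrable (fun Y : Fin (m'+1) → Torus d =>
        ind (tdist x (Y j) ≤ ε) * exclInd d ε (Y ∘ j.succAbove)) := by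
      refine integrable_bdd (C := 1) ?_ fun Y => ?_
      · refine Measurable.mul ?_ ?_
        · exact measurable_ind_tdist_le (γ := Fin (m'+1) → Torus d) (f := fun _ => x)
            (g := fun Y => Y j) measurable_const (measurable_pi_apply j) ε
        · exact (measurable_exclInd ε).comp
            (measurable_pi_iff.mpr fun l => measurable_pi_apply _)
      · exact abs_le_one_of_unit (mul_nonneg (ind_nonneg _) (exclInd_nonneg _ _))
          (mul_le_one₀ (ind_le_one _) (exclInd_nonneg _ _) (exclInd_le_one _ _))
    calc ∫ Y : Fin (m'+1) → Torus d, ind (tdist x (Y j) ≤ ε) * exclInd d ε Y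
        ≤ ∫ Y : Fin (m'+1) → Torus d,
            ind (tdist x (Y j) ≤ ε) * exclInd d ε (Y ∘ j.succAbove) :=
          integral_mono (integrable_term ε x j) hint2 hle
      _ = ∫ p : Torus d × (Fin m' → Torus d),
            ind (tdist x p.1 ≤ ε) * exclInd d ε p.2 := by
          have h := volume_preserving_piFinSuccAbove (fun _ : Fin (m'+1) => Torus d) j
          rw [← h.integral_comp']
          refine integral_congr_ae (Filter.Eventually.of_forall fun Y => ?_)
          simp only [MeasurableEquiv.piFinSuccAbove_apply]
          rfl
      _ = (∫ y : Torus d, ind (tdist x y ≤ ε)) * Zpart d ε m' := by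
          rw [MeasureTheory.Measure.volume_eq_prod,
            MeasureTheory.integral_prod_mul (fun y : Torus d => ind (tdist x y ≤ ε))
              (fun Y : Fin m' → Torus d => exclInd d ε Y), Zpart_eq]
      _ ≤ (ε ^ d * ballVol d) * Zpart d ε m' :=
          mul_le_mul_of_nonneg_right (integral_ind_ball_le hε x) (Zpart_nonneg ε m')
      _ = (ε ^ d * ballVol d) * Zpart d ε (m' + 1 - 1) := by norm_num

lemma Phi_ge {ε : ℝ} (hε : 0 ≤ ε) (s m : ℕ) (X : Fin s → Torus d) :
    Zpart d ε m - (s * m : ℕ) * (ε ^ d * ballVol d) * Zpart d ε (m - 1)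
      ≤ ∫ Y : Fin m → Torus d,
        (∏ i : Fin s, ∏ j : Fin m, ind (ε < tdist (X i) (Y j))) * exclInd d ε Y := by
  have hpt : ∀ Y : Fin m → Torus d,
      exclInd d ε Y - ∑ p : Fin s × Fin m, ind (tdist (X p.1) (Y p.2) ≤ ε) * exclInd d ε Y
        ≤ (∏ i : Fin s, ∏ j : Fin m, ind (ε < tdist (X i) (Y j))) * exclInd d ε Y := by
    intro Y
    have hprod : (∏ i : Fin s, ∏ j : Fin m, ind (ε < tdist (X i) (Y j)))
        = ∏ p : Fin s × Fin m, ind (ε < tdist (X p.1) (Y p.2)) :=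
      (Fintype.prod_prod_type
        (f := fun p : Fin s × Fin m => ind (ε < tdist (X p.1) (Y p.2)))).symm
    have h1 : 1 - ∑ p : Fin s × Fin m, ind (¬ (ε < tdist (X p.1) (Y p.2)))
        ≤ ∏ p : Fin s × Fin m, ind (ε < tdist (X p.1) (Y p.2)) :=
      one_sub_sum_le_prod_ind _ _
    have h2 : (1 - ∑ p : Fin s × Fin m, ind (¬ (ε < tdist (X p.1) (Y p.2)))) * exclInd d ε Y
        ≤ (∏ p : Fin s × Fin m, ind (ε < tdist (X p.1) (Y p.2))) * exclInd d ε Y :=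
      mul_le_mul_of_nonneg_right h1 (exclInd_nonneg _ _)
    rw [hprod]
    refine le_trans (le_of_eq ?_) h2
    rw [sub_mul, one_mul, Finset.sum_mul]
    congr 1
    refine Finset.sum_congr rfl fun p _ => ?_
    rw [ind_le_eq_not_lt]
  have hintsum : Integrable (fun Y : Fin m → Torus d =>
      ∑ p : Fin s × Fin m, ind (tdist (X p.1) (Y p.2) ≤ ε) * exclInd d ε Y) :=
    integrable_finset_sum _ fun p _ => integrable_term ε (X p.1) p.2
  have key : (∫ Y : Fin m → Torus d,
      (exclInd d ε Y - ∑ p : Fin s × Fin m, ind (tdist (X p.1) (Y p.2) ≤ ε) * exclInd d ε Y))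
      ≤ ∫ Y : Fin m → Torus d,
        (∏ i : Fin s, ∏ j : Fin m, ind (ε < tdist (X i) (Y j))) * exclInd d ε Y :=
    integral_mono ((integrable_exclInd ε m).sub hintsum) (integrable_psi ε s m X) hpt
  refine le_trans ?_ key
  rw [MeasureTheory.integral_sub (integrable_exclInd ε m) hintsum,
    MeasureTheory.integral_finset_sum _ (fun p _ => integrable_term ε (X p.1) p.2),
    ← Zpart_eq]
  have hsum : ∑ p : Fin s × Fin m, ∫ Y : Fin m → Torus d,
      ind (tdist (X p.1) (Y p.2) ≤ ε) * exclInd d ε Y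
      ≤ (s * m : ℕ) * ((ε ^ d * ballVol d) * Zpart d ε (m - 1)) := by
    calc ∑ p : Fin s × Fin m, ∫ Y : Fin m → Torus d,
        ind (tdist (X p.1) (Y p.2) ≤ ε) * exclInd d ε Y
        ≤ ∑ _p : Fin s × Fin m, (ε ^ d * ballVol d) * Zpart d ε (m - 1) :=
          Finset.sum_le_sum fun p _ => psi_term_bound hε (X p.1) p.2
      _ = (s * m : ℕ) * ((ε ^ d * ballVol d) * Zpart d ε (m - 1)) := by
          rw [Finset.sum_const, Finset.card_univ, Fintype.card_prod, Fintype.card_fin,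
            Fintype.card_fin, nsmul_eq_mul]
          try push_cast
          try ring
  push_cast at hsum ⊢
  linarith

end HSAux

namespace HSAux

variable {d : ℕ}

lemma gibbsMarginal_eq {β : ℝ} (hβ : 0 < β) (ε : ℝ) {s N : ℕ} (h : s ≤ N)
    (X : Fin s → Torus d) (V : Fin s → Vel d) :
    gibbsMarginal d β ε h X V = (Zpart d ε N)⁻¹ * exclInd d ε X *
      (∫ Y : Fin (N-s) → Torus d,
        (∏ i : Fin s, ∏ j : Fin (N-s), ind (ε < tdist (X i) (Y j))) * exclInd d ε Y) *
      ∏ i, Maxwellian d β (V i) := by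
  unfold gibbsMarginal gibbs
  have hpt : ∀ p : (Fin (N-s) → Torus d) × (Fin (N-s) → Vel d),
      (Zpart d ε N)⁻¹ * exclInd d ε (extend h X p.1) *
          ∏ i, Maxwellian d β (extend h V p.2 i)
      = (fun Y : Fin (N-s) → Torus d =>
          ((Zpart d ε N)⁻¹ * exclInd d ε X * ∏ i, Maxwellian d β (V i)) *
            ((∏ i : Fin s, ∏ j : Fin (N-s), ind (ε < tdist (X i) (Y j))) * exclInd d ε Y)) p.1
        * (fun W : Fin (N-s) → Vel d => ∏ j, Maxwellian d β (W j)) p.2 := by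
    intro p
    rw [excl_extend h ε X p.1, prod_extend h V p.2 (Maxwellian d β)]
    ring
  rw [integral_congr_ae (Filter.Eventually.of_forall hpt),
    MeasureTheory.Measure.volume_eq_prod,
    MeasureTheory.integral_prod_mul
      (fun Y : Fin (N-s) → Torus d =>
        ((Zpart d ε N)⁻¹ * exclInd d ε X * ∏ i, Maxwellian d β (V i)) *
          ((∏ i : Fin s, ∏ j : Fin (N-s), ind (ε < tdist (X i) (Y j))) * exclInd d ε Y))
      (fun W : Fin (N-s) → Vel d => ∏ j, Maxwellian d β (W j)),
    integral_prod_maxwellian hβ (N - s), mul_one,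
    MeasureTheory.integral_const_mul]
  ring

lemma one_add_two_mul_pow_le {x : ℝ} (hx0 : 0 ≤ x) (hx : x ≤ 1/2) (s : ℕ) :
    (1 + 2*x) ^ s ≤ 1 + s * 2^s * x := by
  induction s with
  | zero => norm_num
  | succ s ih =>
    have h2s : (1:ℝ) ≤ 2^s := one_le_pow₀ (by norm_num)
    have hnn : (0:ℝ) ≤ 1 + 2*x := by linarith
    have hs0 : (0:ℝ) ≤ (s:ℝ) := Nat.cast_nonneg s
    have hh1 : (0:ℝ) ≤ (s:ℝ) * 2^s * x * (1 - 2*x) :=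
      mul_nonneg (mul_nonneg (mul_nonneg hs0 (by positivity)) hx0) (by linarith)
    have hh2 : (0:ℝ) ≤ ((2:ℝ)^s - 1) * x := mul_nonneg (by linarith) hx0
    calc (1 + 2*x) ^ (s+1) = (1 + 2*x)^s * (1 + 2*x) := by rw [pow_succ]
      _ ≤ (1 + s * 2^s * x) * (1 + 2*x) := mul_le_mul_of_nonneg_right ih hnn
      _ ≤ 1 + (s+1 : ℕ) * 2^(s+1) * x := by
          push_cast
          rw [pow_succ]
          nlinarith [hh1, hh2]

lemma inv_one_sub_le {x : ℝ} (hx0 : 0 ≤ x) (hx : x ≤ 1/2) : (1 - x)⁻¹ ≤ 1 + 2*x := by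
  have hpos : (0:ℝ) < 1 - x := by linarith
  rw [inv_eq_one_div, div_le_iff₀ hpos]
  nlinarith

lemma master_bound {ZN Zm Phi A : ℝ} (s : ℕ)
    (hZN : 0 < ZN) (hZmN : ZN ≤ Zm)
    (hZNge : (1-A)^s * Zm ≤ ZN)
    (hPhiLe : Phi ≤ Zm) (hPhiGe : Zm - 2*s*A*Zm ≤ Phi) (hPhi0 : 0 ≤ Phi)
    (hA0 : 0 ≤ A) (hA : A ≤ 1/2) :
    |ZN⁻¹ * Phi - 1| ≤ s * 2^(s+1) * A := by
  have hP : (0:ℝ) < (1-A)^s := pow_pos (by linarith) s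
  have h2s : (1:ℝ) ≤ 2^s := one_le_pow₀ (by norm_num)
  have hs0 : (0:ℝ) ≤ (s:ℝ) := Nat.cast_nonneg s
  have hdiv : ZN⁻¹ * Phi = Phi / ZN := inv_mul_eq_div _ _
  have hup : ZN⁻¹ * Phi - 1 ≤ s * 2^s * A := by
    have h1 : Zm ≤ ((1-A)^s)⁻¹ * ZN := by
      have h2 := mul_le_mul_of_nonneg_left hZNge (le_of_lt (inv_pos.mpr hP))
      rwa [← mul_assoc, inv_mul_cancel₀ (ne_of_gt hP), one_mul] at h2
    have h4 : Zm / ZN ≤ ((1-A)^s)⁻¹ := (div_le_iff₀ hZN).mpr h1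
    have h3 : Phi / ZN ≤ Zm / ZN := by gcongr
    have h7 : ((1-A)⁻¹)^s ≤ (1+2*A)^s := by
      refine pow_le_pow_left₀ (le_of_lt (inv_pos.mpr (by linarith : (0:ℝ) < 1 - A)))
        (inv_one_sub_le hA0 hA) s
    have h8 := one_add_two_mul_pow_le hA0 hA s
    rw [hdiv]
    calc Phi / ZN - 1 ≤ ((1-A)^s)⁻¹ - 1 := by linarith
      _ = ((1-A)⁻¹)^s - 1 := by rw [← inv_pow]
      _ ≤ (1+2*A)^s - 1 := by linarith
      _ ≤ s * 2^s * A := by linarith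
  have hlo : 1 - ZN⁻¹ * Phi ≤ 2 * s * A := by
    by_cases hc : 0 ≤ 1 - 2*s*A
    · have hexp : (1 - 2*(s:ℝ)*A) * Zm = Zm - 2*s*A*Zm := by ring
      have h3 : (1 - 2*(s:ℝ)*A) * ZN ≤ Phi := by
        calc (1 - 2*(s:ℝ)*A) * ZN ≤ (1 - 2*(s:ℝ)*A) * Zm := mul_le_mul_of_nonneg_left hZmN hc
          _ ≤ Phi := by rw [hexp]; exact hPhiGe
      have h4 : 1 - 2*(s:ℝ)*A ≤ Phi / ZN := (le_div_iff₀ hZN).mpr h3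
      rw [hdiv]
      linarith
    · push_neg at hc
      have h1 : 0 ≤ ZN⁻¹ * Phi := mul_nonneg (le_of_lt (inv_pos.mpr hZN)) hPhi0
      linarith
  have hb2 : (2:ℝ) ≤ 2^(s+1) := by
    calc (2:ℝ) = 2^1 := (pow_one 2).symm
      _ ≤ 2^(s+1) := pow_le_pow_right₀ (by norm_num) (by omega)
  have hpow : (2:ℝ)^s ≤ 2^(s+1) := pow_le_pow_right₀ (by norm_num) (by omega)
  have hbig1 : 2 * (s:ℝ) * A ≤ s * 2^(s+1) * A := by nlinarith [mul_nonneg hs0 hA0]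
  have hbig2 : (s:ℝ) * 2^s * A ≤ s * 2^(s+1) * A := by nlinarith [mul_nonneg hs0 hA0]
  rw [abs_le]
  exact ⟨by linarith, by linarith⟩

end HSAux

namespace HSAux

variable {d : ℕ}

lemma two_mul_le_four_pow (s : ℕ) : 2*(s:ℝ) ≤ 4^s := by
  induction s with
  | zero => norm_num
  | succ s ih =>
    have h1 : (1:ℝ) ≤ 4^s := one_le_pow₀ (by norm_num)
    push_cast
    rw [pow_succ]
    push_cast at ih
    nlinarith

lemma C_pow_bound {K : ℝ} (hK : 0 ≤ K) {s : ℕ} (hs : 1 ≤ s) :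
    (s:ℝ) * 2^(s+1) * K ≤ (8*(K+1))^s := by
  have h4 := two_mul_le_four_pow s
  have hKK : K ≤ (K+1)^s := by
    calc K ≤ K + 1 := by linarith
      _ = (K+1)^1 := (pow_one _).symm
      _ ≤ (K+1)^s := pow_le_pow_right₀ (by linarith) hs
  have h8 : (8:ℝ)^s = 2^s * 4^s := by rw [← mul_pow]; norm_num
  calc (s:ℝ) * 2^(s+1) * K = (2*(s:ℝ)) * 2^s * K := by rw [pow_succ]; ring
    _ ≤ 4^s * 2^s * K := by
        refine mul_le_mul_of_nonneg_right (mul_le_mul_of_nonneg_right h4 (by positivity)) hK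
    _ = 8^s * K := by rw [h8]; ring
    _ ≤ 8^s * (K+1)^s := by
        refine mul_le_mul_of_nonneg_left hKK (by positivity)
    _ = (8*(K+1))^s := (mul_pow _ _ _).symm

end HSAux

/-- Asymptotic factorization of the perturbed initial data: for a continuous probability
density `ρ⁰` on the torus, with `f_N^{0(s)}(Z_s) = ρ⁰(x₁) M_{N,β}^{(s)}(Z_s)` and
`g^{0(s)}(Z_s) = ρ⁰(x₁) M_β^{⊗s}(V_s)`, there is `C > 0` depending only on `d` such that,
in the scaling `α = N ε^{d-1}` with `ε α κ_d ≤ 1/2`,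
`|(f_N^{0(s)} - g^{0(s)}) 1_{𝒟_ε^s}| ≤ C^s ε α M_β^{⊗s} ‖ρ⁰‖_{L^∞}` pointwise. -/
theorem initial_data_factorization
    (d : ℕ) (hd : 2 ≤ d) (β : ℝ) (hβ : 0 < β) :
    ∃ C > (0:ℝ), ∀ ρ : Torus d → ℝ, Continuous ρ → (∀ x, 0 ≤ ρ x) →
      (∫ x : Torus d, ρ x) = 1 →
      ∀ s N : ℕ, ∀ hs : 1 ≤ s, ∀ hsN : s ≤ N,
      ∀ ε : ℝ, 0 < ε → ε < 1/2 → ∀ α : ℝ, α = N * ε ^ (d - 1) →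
        ε * α * ballVol d ≤ 1/2 →
      ∀ (X : Fin s → Torus d) (V : Fin s → Vel d),
        |(ρ (X ⟨0, hs⟩) * gibbsMarginal d β ε hsN X V -
            ρ (X ⟨0, hs⟩) * ∏ i, Maxwellian d β (V i)) * exclInd d ε X| ≤
          C ^ s * ε * α * (∏ i, Maxwellian d β (V i)) * ⨆ x, |ρ x| := by
  classical
  have hK0 : 0 ≤ ballVol d := HSAux.ballVol_nonneg d
  refine ⟨8 * (ballVol d + 1), by linarith, ?_⟩
  intro ρ hρcont hρ0 hρint s N hs hsN ε hε hεhalf α hα hεα X V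
  haveI : Fact ((0:ℝ) < 1) := ⟨one_pos⟩
  have hM0 : 0 ≤ ∏ i, Maxwellian d β (V i) :=
    Finset.prod_nonneg fun i _ => HSAux.maxwellian_nonneg hβ (V i)
  have hbdd : BddAbove (Set.range fun x : Torus d => |ρ x|) := by
    rw [← Set.image_univ]
    exact (isCompact_univ.image hρcont.abs).bddAbove
  have hRle : ∀ x : Torus d, |ρ x| ≤ ⨆ x : Torus d, |ρ x| := fun x => le_ciSup hbdd x
  have hR0 : 0 ≤ ⨆ x : Torus d, |ρ x| := le_trans (abs_nonneg _) (hRle (X ⟨0, hs⟩))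
  have hα0 : 0 ≤ α := by
    rw [hα]; positivity
  have ha0 : (0:ℝ) ≤ ε ^ d * ballVol d := mul_nonneg (pow_nonneg hε.le d) hK0
  have hεα' : ε * α = (N:ℝ) * ε ^ d := by
    have hd1 : d - 1 + 1 = d := by omega
    calc ε * α = (N:ℝ) * (ε ^ (d-1) * ε) := by rw [hα]; ring
      _ = (N:ℝ) * ε ^ (d - 1 + 1) := by rw [pow_succ]
      _ = (N:ℝ) * ε ^ d := by rw [hd1]
  have hAeq : (N:ℝ) * (ε ^ d * ballVol d) = ε * α * ballVol d := by
    rw [hεα']; ring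
  have hA : (N:ℝ) * (ε ^ d * ballVol d) ≤ 1/2 := by rw [hAeq]; exact hεα
  have hA0 : (0:ℝ) ≤ (N:ℝ) * (ε ^ d * ballVol d) := mul_nonneg (Nat.cast_nonneg N) ha0
  by_cases hX : ∀ i j : Fin s, i ≠ j → ε < tdist (X i) (X j)
  case neg =>
    rw [show exclInd d ε X = 0 from HSAux.ind_of_not hX, mul_zero, abs_zero]
    have hC : (0:ℝ) ≤ (8*(ballVol d + 1))^s := by positivity
    exact mul_nonneg (mul_nonneg (mul_nonneg (mul_nonneg hC hε.le) hα0) hM0) hR0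
  case pos =>
    have hX1 : exclInd d ε X = 1 := HSAux.ind_of hX
    have hZN : 0 < Zpart d ε N := HSAux.Zpart_pos hε.le N hA
    have hNsm : N - s + s = N := by omega
    have hZmN : Zpart d ε N ≤ Zpart d ε (N - s) := by
      have h := HSAux.Zpart_anti (d := d) ε (N - s) s
      rwa [hNsm] at h
    have hZNge : (1 - (N:ℝ)*(ε^d* ballVol d))^s * Zpart d ε (N-s) ≤ Zpart d ε N := by
      have h := HSAux.Zpart_chain_ge (d := d) hε.le N (N - s) (by linarith) s (by omega)
      rwa [hNsm] at h
    have hPhiLe := HSAux.Phi_le (d := d) ε s (N-s) X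
    have hPhi0 := HSAux.Phi_nonneg (d := d) ε s (N-s) X
    have hPhiGe : Zpart d ε (N-s) - 2*(s:ℝ)*((N:ℝ)*(ε^d*ballVol d))*Zpart d ε (N-s)
        ≤ ∫ Y : Fin (N-s) → Torus d,
            (∏ i : Fin s, ∏ j : Fin (N-s), ind (ε < tdist (X i) (Y j))) * exclInd d ε Y := by
      have h := HSAux.Phi_ge (d := d) hε.le s (N-s) X
      have hterm : ((s * (N-s) : ℕ):ℝ) * (ε^d*ballVol d) * Zpart d ε (N-s-1)
          ≤ 2*(s:ℝ)*((N:ℝ)*(ε^d*ballVol d))*Zpart d ε (N-s) := by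
        rcases Nat.eq_zero_or_pos (N - s) with h0 | hpos
        · rw [h0]
          simp only [Nat.mul_zero, Nat.cast_zero, zero_mul]
          have hZnn := HSAux.Zpart_nonneg (d := d) ε (N-s)
          have : (0:ℝ) ≤ 2*(s:ℝ)*((N:ℝ)*(ε^d*ballVol d))*Zpart d ε (N-s) := by
            refine mul_nonneg (mul_nonneg (by positivity) hA0) hZnn
          rw [h0] at this
          exact this
        · have hk := HSAux.Zpart_succ_ge (d := d) hε.le (N-s-1)
          have hidx : N - s - 1 + 1 = N - s := by omega
          rw [hidx] at hk
          have hle1 : ((N-s-1:ℕ):ℝ) * (ε^d*ballVol d) ≤ (N:ℝ)*(ε^d*ballVol d) :=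
            mul_le_mul_of_nonneg_right (Nat.cast_le.mpr (by omega)) ha0
          have hZ1 := HSAux.Zpart_nonneg (d := d) ε (N-s-1)
          have hZm := HSAux.Zpart_nonneg (d := d) ε (N-s)
          have h2 : Zpart d ε (N-s-1) ≤ 2 * Zpart d ε (N-s) := by nlinarith [hk]
          have hcast : ((s*(N-s):ℕ):ℝ) ≤ (s:ℝ) * (N:ℝ) := by
            have h3 : (s*(N-s):ℕ) ≤ s*N := Nat.mul_le_mul_left s (by omega)
            calc ((s*(N-s):ℕ):ℝ) ≤ ((s*N : ℕ):ℝ) := Nat.cast_le.mpr h3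
              _ = (s:ℝ) * (N:ℝ) := by push_cast; ring
          have hc0 : (0:ℝ) ≤ ((s*(N-s):ℕ):ℝ) := Nat.cast_nonneg _
          calc ((s * (N-s) : ℕ):ℝ) * (ε^d*ballVol d) * Zpart d ε (N-s-1)
              ≤ ((s * (N-s) : ℕ):ℝ) * (ε^d*ballVol d) * (2 * Zpart d ε (N-s)) :=
                mul_le_mul_of_nonneg_left h2 (mul_nonneg hc0 ha0)
            _ ≤ ((s:ℝ) * (N:ℝ)) * (ε^d*ballVol d) * (2 * Zpart d ε (N-s)) := by
                refine mul_le_mul_of_nonneg_right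
                  (mul_le_mul_of_nonneg_right hcast ha0) (by linarith)
            _ = 2*(s:ℝ)*((N:ℝ)*(ε^d*ballVol d))*Zpart d ε (N-s) := by ring
      linarith [h, hterm]
    have hmaster := HSAux.master_bound (ZN := Zpart d ε N) (Zm := Zpart d ε (N-s))
      (A := (N:ℝ)*(ε^d*ballVol d)) s hZN hZmN hZNge hPhiLe hPhiGe hPhi0 hA0 hA
    rw [HSAux.gibbsMarginal_eq hβ ε hsN X V, hX1]
    set Φv := ∫ Y : Fin (N-s) → Torus d,
        (∏ i : Fin s, ∏ j : Fin (N-s), ind (ε < tdist (X i) (Y j))) * exclInd d ε Y with hΦv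
    calc |(ρ (X ⟨0,hs⟩) * ((Zpart d ε N)⁻¹ * 1 * Φv * ∏ i, Maxwellian d β (V i)) -
            ρ (X ⟨0,hs⟩) * ∏ i, Maxwellian d β (V i)) * 1|
        = |ρ (X ⟨0,hs⟩) * ∏ i, Maxwellian d β (V i)| * |(Zpart d ε N)⁻¹ * Φv - 1| := by
          rw [← abs_mul]
          congr 1
          ring
      _ = |ρ (X ⟨0,hs⟩)| * (∏ i, Maxwellian d β (V i)) * |(Zpart d ε N)⁻¹ * Φv - 1| := by
          rw [abs_mul, abs_of_nonneg hM0]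
      _ ≤ (⨆ x : Torus d, |ρ x|) * (∏ i, Maxwellian d β (V i)) *
            ((s:ℝ) * 2^(s+1) * ((N:ℝ)*(ε^d*ballVol d))) := by
          refine mul_le_mul ?_ hmaster (abs_nonneg _) (mul_nonneg hR0 hM0)
          exact mul_le_mul_of_nonneg_right (hRle _) hM0
      _ = ((s:ℝ) * 2^(s+1) * ballVol d) * (ε*α) * (∏ i, Maxwellian d β (V i)) *
            (⨆ x : Torus d, |ρ x|) := by
          rw [hAeq]
          ring
      _ ≤ (8*(ballVol d + 1))^s * (ε*α) * (∏ i, Maxwellian d β (V i)) *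
            (⨆ x : Torus d, |ρ x|) := by
          have hC := HSAux.C_pow_bound hK0 hs
          refine mul_le_mul_of_nonneg_right (mul_le_mul_of_nonneg_right
            (mul_le_mul_of_nonneg_right hC (mul_nonneg hε.le hα0)) hM0) hR0
      _ = (8*(ballVol d + 1))^s * ε * α * (∏ i, Maxwellian d β (V i)) *
            (⨆ x : Torus d, |ρ x|) := by ring

end
end

section
/- Let d ≥ 2. There exists a constant C > 0 depending only on d with the following property. Let t > 0, E > 0, and let parameters satisfy 0 < ε ≤ ā, 6ā ≤ ε₀ ≤ 1. For any two points x₁⁰, x₂⁰ ∈ 𝕋^d with d(x₁⁰, x₂⁰) ≥ ε₀ and any velocity v₁ ∈ ℝ^d with |v₁| ≤ E, there exists a Lebesgue-measurable set K ⊂ ℝ^d with Lebesgue measure |K| ≤ C E^d ( (ā/ε₀)^{d−1} + (E t)^d ā^{d−1} ) such that: for every v₂ ∈ ℝ^d with |v₂| ≤ E and v₁ − v₂ ∉ K, and for all x₁, x₂ ∈ 𝕋^d with d(x₁, x₁⁰) ≤ ā and d(x₂, x₂⁰) ≤ ā, one has d(x₁ − u v₁, x₂ − u v₂) > ε for every u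 ∈ [0, t]. -/
open MeasureTheory Real

noncomputable section

/-- Projection `ℝ^d → (ℝ/ℤ)^d`. -/
noncomputable def toTorus {d : ℕ} (v : Vel d) : Torus d := fun i => (v i : AddCircle (1:ℝ))

/-- The (backward) free flow on the torus: `x - u v`. -/
noncomputable def flow {d : ℕ} (x : Torus d) (u : ℝ) (v : Vel d) : Torus d :=
  x - toTorus (u • v)

/- ### Auxiliary lemmas -/

noncomputable def intVec {d : ℕ} (m : Fin d → ℤ) : Vel d := WithLp.toLp 2 (fun i => (m i : ℝ))

namespace FreeFlowAux

variable {d : ℕ}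

@[simp] lemma intVec_apply (m : Fin d → ℤ) (i : Fin d) : intVec m i = (m i : ℝ) := rfl

lemma tdist_eq (x y : Torus d) :
    tdist x y = dist ((WithLp.equiv 2 _).symm x : PiLp 2 fun _ : Fin d => AddCircle (1:ℝ))
      ((WithLp.equiv 2 _).symm y) := by
  rw [PiLp.dist_eq_sum (p := 2) (by norm_num)]
  simp [tdist, Real.sqrt_eq_rpow, Real.rpow_natCast]

lemma tdist_triangle (x y z : Torus d) : tdist x z ≤ tdist x y + tdist y z := by
  simp only [tdist_eq]; exact dist_triangle _ _ _

lemma tdist_comm (x y : Torus d) : tdist x y = tdist y x := by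
  simp [tdist, dist_comm]

lemma tdist_add_right (x y z : Torus d) : tdist (x + z) (y + z) = tdist x y := by
  simp [tdist, dist_add_right]

lemma tdist_neg (x y : Torus d) : tdist (-x) (-y) = tdist x y := by
  simp [tdist, dist_neg_neg]

lemma tdist_nonneg' (x y : Torus d) : 0 ≤ tdist x y := Real.sqrt_nonneg _

lemma tdist_sub_zero (x y : Torus d) : tdist (x - y) 0 = tdist x y := by
  have := tdist_add_right (x - y) 0 y
  simpa [sub_add_cancel] using this.symm

lemma tdist_sub_sub (x₁ x₂ y₁ y₂ : Torus d) :
    tdist (x₁ - x₂) (y₁ - y₂) ≤ tdist x₁ y₁ + tdist x₂ y₂ := by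
  have e1 : tdist (x₁ - x₂) (y₁ - x₂) = tdist x₁ y₁ := by
    rw [sub_eq_add_neg, sub_eq_add_neg]; exact tdist_add_right x₁ y₁ (-x₂)
  have e2 : tdist (y₁ - x₂) (y₁ - y₂) = tdist x₂ y₂ := by
    have h1 : y₁ - x₂ = -x₂ + y₁ := by abel
    have h2 : y₁ - y₂ = -y₂ + y₁ := by abel
    rw [h1, h2, tdist_add_right (-x₂) (-y₂) y₁, tdist_neg]
  calc tdist (x₁ - x₂) (y₁ - y₂)
      ≤ tdist (x₁ - x₂) (y₁ - x₂) + tdist (y₁ - x₂) (y₁ - y₂) := tdist_triangle _ _ _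
    _ = tdist x₁ y₁ + tdist x₂ y₂ := by rw [e1, e2]

lemma exists_lift (z : Torus d) : ∃ p : Vel d, toTorus p = z ∧ ∀ i, |p i| ≤ 1/2 := by
  have h : ∀ i, ∃ r : ℝ, (r : AddCircle (1:ℝ)) = z i ∧ |r| ≤ 1/2 := by
    intro i
    obtain ⟨s, hs⟩ := QuotientAddGroup.mk_surjective (z i)
    refine ⟨s - round s, ?_, abs_sub_round s⟩
    rw [AddCircle.coe_sub, ← hs]
    have h0 : ((round s : ℝ) : AddCircle (1:ℝ)) = 0 := by
      rw [AddCircle.coe_eq_zero_iff]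
      exact ⟨round s, by simp⟩
    rw [h0, sub_zero]
  choose p hp hb using h
  exact ⟨WithLp.toLp 2 p, funext hp, hb⟩

lemma tdist_toTorus_le (a b : Vel d) (m : Fin d → ℤ) :
    tdist (toTorus a) (toTorus b) ≤ ‖a - b - intVec m‖ := by
  rw [EuclideanSpace.norm_eq, tdist]
  apply Real.sqrt_le_sqrt
  apply Finset.sum_le_sum
  intro i _
  have h1 : dist (toTorus a i) (toTorus b i) ≤ |a i - b i - (m i : ℝ)| := by
    rw [toTorus, toTorus, dist_eq_norm, ← AddCircle.coe_sub, AddCircle.norm_eq]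
    simp only [inv_one, one_mul, mul_one]
    exact round_le _ _
  have h2 : (0:ℝ) ≤ dist (toTorus a i) (toTorus b i) := dist_nonneg
  have h3 : ‖(a - b - intVec m) i‖ = |a i - b i - (m i : ℝ)| := by
    simp [Real.norm_eq_abs]
  rw [h3]
  exact pow_le_pow_left₀ h2 h1 2

lemma tdist_toTorus_exists (a b : Vel d) :
    ∃ m : Fin d → ℤ, ‖a - b - intVec m‖ = tdist (toTorus a) (toTorus b) := by
  refine ⟨fun i => round (a i - b i), ?_⟩
  rw [EuclideanSpace.norm_eq, tdist]
  congr 1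
  apply Finset.sum_congr rfl
  intro i _
  rw [toTorus, toTorus, dist_eq_norm, ← AddCircle.coe_sub, AddCircle.norm_eq]
  simp [Real.norm_eq_abs]

lemma toTorus_sub (a b : Vel d) : toTorus (a - b) = toTorus a - toTorus b := by
  funext i
  simp [toTorus]

lemma toTorus_zero : toTorus (0 : Vel d) = 0 := by
  funext i; simp [toTorus]

lemma coord_le_norm (z : Vel d) (i : Fin d) : |z i| ≤ ‖z‖ := by
  rw [EuclideanSpace.norm_eq, ← Real.sqrt_sq (abs_nonneg (z i))]
  apply Real.sqrt_le_sqrt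
  rw [sq_abs]
  calc z i ^ 2 = ‖z i‖ ^ 2 := by rw [Real.norm_eq_abs, sq_abs]
    _ ≤ ∑ j, ‖z j‖^2 := Finset.single_le_sum (f := fun j => ‖z j‖^2)
        (fun j _ => by positivity) (Finset.mem_univ i)

lemma vol_box (c : Fin d → ℝ) :
    (volume : Measure (EuclideanSpace ℝ (Fin d)))
      (WithLp.ofLp ⁻¹' Set.univ.pi (fun i => Set.Icc (-(c i)) (c i)))
      = ∏ i : Fin d, ENNReal.ofReal (2 * c i) := by
  have h := (EuclideanSpace.volume_preserving_symm_measurableEquiv_toLp (Fin d)).measure_preimage_equiv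
    (Set.univ.pi (fun i => Set.Icc (-(c i)) (c i)))
  rw [volume_pi_pi] at h
  refine Eq.trans ?_ (h.trans ?_)
  · rfl
  · congr 1; funext i; rw [Real.volume_Icc]; congr 1; ring

lemma tube (hd : 0 < d) (q : Vel d) (δ L : ℝ) (hδ : 0 < δ) (hL : 0 < L) (hq : 2 * δ ≤ ‖q‖) :
    ∃ S : Set (Vel d), MeasurableSet S ∧
      volume S ≤ ENNReal.ofReal (2 * L) * ENNReal.ofReal (2 * (2 * δ * L / ‖q‖)) ^ (d - 1) ∧
      ∀ w : Vel d, ‖w‖ ≤ L → ∀ u : ℝ, 0 < u → ‖u • w - q‖ ≤ δ → w ∈ S := by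
  have hqpos : 0 < ‖q‖ := lt_of_lt_of_le (by linarith) hq
  set e : Vel d := ‖q‖⁻¹ • q with he
  have hene : ‖e‖ = 1 := by
    rw [he, norm_smul, norm_inv, norm_norm, inv_mul_cancel₀ hqpos.ne']
  set ρ : ℝ := 2 * δ * L / ‖q‖ with hρdef
  have hρpos : 0 < ρ := by positivity
  have hcard : Module.finrank ℝ (Vel d) = Fintype.card (Fin d) := by simp
  set i0 : Fin d := ⟨0, hd⟩ with hi0
  have horth : Orthonormal ℝ (Set.restrict {i0} (fun _ : Fin d => e)) := by
    constructor
    · intro i; exact hene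
    · intro i j hij; exact absurd (Subsingleton.elim i j) hij
  obtain ⟨b, hb⟩ := horth.exists_orthonormalBasis_extension_of_card_eq hcard
  have hb0 : b i0 = e := hb i0 rfl
  set c : Fin d → ℝ := fun i => if i = i0 then L else ρ with hc
  set box : Set (EuclideanSpace ℝ (Fin d)) :=
    WithLp.ofLp ⁻¹' Set.univ.pi (fun i => Set.Icc (-(c i)) (c i)) with hbox
  have hboxmeas : MeasurableSet box :=
    (MeasurableSet.univ_pi fun i => measurableSet_Icc).preimage (PiLp.volume_preserving_ofLp (Fin d)).measurable
  set P : Vel d → Vel d := fun z => z - (inner ℝ e z : ℝ) • e with hP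
  have hPle : ∀ z, ‖P z‖ ≤ ‖z‖ := by
    intro z
    have hsq : ‖P z‖ ^ 2 = ‖z‖ ^ 2 - (inner ℝ e z : ℝ) ^ 2 := by
      rw [hP]
      rw [norm_sub_sq_real, real_inner_smul_right, norm_smul]
      rw [real_inner_comm]
      simp [hene, Real.norm_eq_abs, sq_abs]
      ring
    nlinarith [norm_nonneg (P z), norm_nonneg z, sq_nonneg ((inner ℝ e z : ℝ))]
  refine ⟨b.repr ⁻¹' box, hboxmeas.preimage b.repr.continuous.measurable, ?_, ?_⟩
  · rw [b.measurePreserving_repr.measure_preimage hboxmeas.nullMeasurableSet]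
    rw [hbox, vol_box]
    rw [← Finset.mul_prod_erase Finset.univ _ (Finset.mem_univ i0)]
    have h1 : c i0 = L := by simp [hc]
    rw [h1]
    have h2 : ∀ i ∈ Finset.univ.erase i0, ENNReal.ofReal (2 * c i) = ENNReal.ofReal (2 * ρ) := by
      intro i hi
      have : i ≠ i0 := (Finset.mem_erase.1 hi).1
      simp [hc, this]
    rw [Finset.prod_congr rfl h2, Finset.prod_const]
    rw [Finset.card_erase_of_mem (Finset.mem_univ i0), Finset.card_univ, Fintype.card_fin]
  · intro w hw u hu hclose
    have hPw : ‖P w‖ ≤ ρ := by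
      have hq2 : ‖q‖ / 2 ≤ u * ‖w‖ := by
        have h3 : ‖q‖ ≤ ‖u • w - q‖ + ‖u • w‖ := by
          calc ‖q‖ = ‖u • w - (u • w - q)‖ := by congr 1; abel
            _ ≤ ‖u • w‖ + ‖u • w - q‖ := norm_sub_le _ _
            _ = ‖u • w - q‖ + ‖u • w‖ := by ring
        have h4 : ‖u • w‖ = u * ‖w‖ := by
          rw [norm_smul, Real.norm_eq_abs, abs_of_pos hu]
        linarith
      have hwpos : 0 < ‖w‖ := by
        rcases (norm_nonneg w).lt_or_eq with h | h
        · exact h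
        · exfalso; rw [← h] at hq2; simp at hq2; nlinarith
      have hulb : ‖q‖ / (2 * L) ≤ u := by
        rw [div_le_iff₀ (by positivity)]
        calc ‖q‖ ≤ u * ‖w‖ * 2 := by linarith
          _ ≤ u * L * 2 := by nlinarith
          _ = u * (2 * L) := by ring
      have h5 : (inner ℝ e q : ℝ) = ‖q‖ := by
        rw [he, real_inner_smul_left, real_inner_self_eq_norm_sq]
        field_simp
      have hPq : P q = 0 := by
        rw [hP]
        simp only
        rw [h5, he, smul_smul, mul_inv_cancel₀ hqpos.ne', one_smul, sub_self]
      have hPuw : P (u • w) = u • P w := by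
        rw [hP]
        simp only [real_inner_smul_right, smul_sub, smul_smul]
      have hkey : u * ‖P w‖ ≤ δ := by
        have h6 : ‖P (u • w) - P q‖ ≤ ‖u • w - q‖ := by
          have hPsub : P (u • w) - P q = P (u • w - q) := by
            rw [hP]; simp only
            rw [inner_sub_right, sub_smul]
            abel
          rw [hPsub]
          exact hPle _
        rw [hPq, sub_zero, hPuw, norm_smul, Real.norm_eq_abs, abs_of_pos hu] at h6
        linarith
      have h7 : ‖P w‖ ≤ δ / u := by
        rw [le_div_iff₀ hu]; linarith [hkey]
      calc ‖P w‖ ≤ δ / u := h7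
        _ ≤ ρ := by
          rw [hρdef, div_le_div_iff₀ hu hqpos]
          calc δ * ‖q‖ = (‖q‖ / (2*L)) * (δ * (2*L)) := by field_simp
            _ ≤ u * (δ * (2*L)) := by
                apply mul_le_mul_of_nonneg_right hulb (by positivity)
            _ = 2 * δ * L * u := by ring
    have hmem : ∀ i, |(inner ℝ (b i) w : ℝ)| ≤ c i := by
      intro i
      by_cases hii : i = i0
      · subst hii
        rw [hb0, hc]
        simp only [if_pos rfl]
        calc |(inner ℝ e w : ℝ)| ≤ ‖e‖ * ‖w‖ := abs_real_inner_le_norm e w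
          _ = ‖w‖ := by rw [hene, one_mul]
          _ ≤ L := hw
      · have hio : (inner ℝ (b i) e : ℝ) = 0 := by
          rw [← hb0]
          exact b.orthonormal.2 hii
        have h8 : (inner ℝ (b i) w : ℝ) = (inner ℝ (b i) (P w) : ℝ) := by
          rw [hP]
          simp only [inner_sub_right, real_inner_smul_right, hio, mul_zero, sub_zero]
        rw [h8, hc]
        simp only [if_neg hii]
        calc |(inner ℝ (b i) (P w) : ℝ)| ≤ ‖b i‖ * ‖P w‖ := abs_real_inner_le_norm _ _
          _ = ‖P w‖ := by rw [b.orthonormal.1 i, one_mul]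
          _ ≤ ρ := hPw
    intro i _
    rw [b.repr_apply_apply]
    have h9 := hmem i
    rw [abs_le] at h9
    exact ⟨by linarith [h9.1], h9.2⟩

lemma card_Icc_int (N : ℕ) : (Finset.Icc (-(N:ℤ)) N).card = 2*N+1 := by
  rw [Int.card_Icc]
  omega

lemma aux_pow (d : ℕ) (s : ℝ) (hs : 0 ≤ s) : (s+1)^d ≤ 2^d * (1 + s^d) := by
  rcases le_total s 1 with h | h
  · calc (s+1)^d ≤ 2^d := pow_le_pow_left₀ (by linarith) (by linarith) d
      _ ≤ 2^d * (1+s^d) := by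
        nlinarith [pow_nonneg hs d, pow_pos (zero_lt_two (α := ℝ)) d]
  · calc (s+1)^d ≤ (2*s)^d := pow_le_pow_left₀ (by linarith) (by linarith) d
      _ = 2^d * s^d := mul_pow 2 s d
      _ ≤ 2^d * (1+s^d) := by
        nlinarith [pow_nonneg hs d, pow_pos (zero_lt_two (α := ℝ)) d]

end FreeFlowAux

open FreeFlowAux

set_option maxHeartbeats 1600000 in
/-- Geometric control of free trajectories on the torus (no near-collision on `[0,t]`):
given `x₁⁰, x₂⁰` at distance at least `ε₀` and `|v₁| ≤ E`, there is a bad set `K` of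
velocities of measure at most `C E^d ((ā/ε₀)^{d-1} + (Et)^d ā^{d-1})` such that if
`v₁ - v₂ ∉ K`, `|v₂| ≤ E`, and `x₁, x₂` are `ā`-close to `x₁⁰, x₂⁰`, then
`d(x₁ - u v₁, x₂ - u v₂) > ε` for all `u ∈ [0,t]`. -/
theorem free_flow_no_collision
    (d : ℕ) (hd : 2 ≤ d) :
    ∃ C > (0:ℝ), ∀ t E ε abar ε₀ : ℝ,
      0 < t → 0 < E → 0 < ε → ε ≤ abar → 6 * abar ≤ ε₀ → ε₀ ≤ 1 →
      ∀ (x₁ x₂ : Torus d) (v₁ : Vel d), ε₀ ≤ tdist x₁ x₂ → ‖v₁‖ ≤ E →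
      ∃ K : Set (Vel d), MeasurableSet K ∧
        volume K ≤ ENNReal.ofReal
          (C * E ^ d * ((abar / ε₀) ^ (d - 1) + (E * t) ^ d * abar ^ (d - 1))) ∧
        ∀ v₂ : Vel d, ‖v₂‖ ≤ E → v₁ - v₂ ∉ K →
          ∀ y₁ y₂ : Torus d, tdist y₁ x₁ ≤ abar → tdist y₂ x₂ ≤ abar →
            ∀ u ∈ Set.Icc (0:ℝ) t, ε < tdist (flow y₁ u v₁) (flow y₂ u v₂) := by
  have hd1 : 0 < d := by omega
  obtain ⟨d1, rfl⟩ : ∃ d1, d = d1 + 1 := ⟨d - 1, (Nat.succ_pred_eq_of_pos hd1).symm⟩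
  refine ⟨4 * 24^d1 * (3^(d1+1) + 14^(d1+1)), by positivity, ?_⟩
  intro t E ε abar ε₀ ht hE hε hεa hε₀ hε₀1 x₁ x₂ v₁ hx hv₁
  have habar : 0 < abar := lt_of_lt_of_le hε hεa
  have hε₀pos : 0 < ε₀ := by linarith
  obtain ⟨p, hpt, hpb⟩ := exists_lift (x₁ - x₂)
  set N : ℕ := ⌈2 * E * t⌉₊ + 2 with hN
  set F : Finset (Fin (d1+1) → ℤ) := Fintype.piFinset (fun _ => Finset.Icc (-(N:ℤ)) N) with hF
  clear_value N
  have hqlow : ∀ m : Fin (d1+1) → ℤ, ε₀ ≤ ‖p - intVec m‖ := by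
    intro m
    calc ε₀ ≤ tdist x₁ x₂ := hx
      _ = tdist (x₁ - x₂) 0 := (tdist_sub_zero _ _).symm
      _ = tdist (toTorus p) (toTorus 0) := by rw [hpt, toTorus_zero]
      _ ≤ ‖p - 0 - intVec m‖ := tdist_toTorus_le p 0 m
      _ = ‖p - intVec m‖ := by rw [sub_zero]
  have htube : ∀ m : Fin (d1+1) → ℤ, ∃ S : Set (Vel (d1+1)), MeasurableSet S ∧
      volume S ≤ ENNReal.ofReal (2 * (2*E)) *
        ENNReal.ofReal (2 * (2 * (3*abar) * (2*E) / ‖p - intVec m‖)) ^ (d1+1-1) ∧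
      ∀ w : Vel (d1+1), ‖w‖ ≤ 2*E → ∀ u : ℝ, 0 < u →
        ‖u • w - (p - intVec m)‖ ≤ 3*abar → w ∈ S := by
    intro m
    exact tube hd1 _ (3*abar) (2*E) (by linarith) (by linarith) (by linarith [hqlow m])
  choose S hSmeas hSvol hSmem using htube
  set g : (Fin (d1+1) → ℤ) → ℝ := fun m =>
    if ∀ i, |m i| ≤ 1 then 4*E*(24*abar*E/ε₀)^d1 else 4*E*(24*abar*E)^d1 with hg
  refine ⟨⋃ m ∈ F, S m, F.measurableSet_biUnion (fun m _ => hSmeas m), ?_, ?_⟩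
  · -- volume bound
    have hbound : ∀ m ∈ F, volume (S m) ≤ ENNReal.ofReal (g m) := by
      intro m _
      refine le_trans (hSvol m) ?_
      rw [← ENNReal.ofReal_pow (by positivity), ← ENNReal.ofReal_mul (by positivity)]
      apply ENNReal.ofReal_le_ofReal
      simp only [Nat.add_sub_cancel]
      have hqm := hqlow m
      have hqmpos : 0 < ‖p - intVec m‖ := lt_of_lt_of_le hε₀pos hqm
      have e0 : 2 * (2 * (3*abar) * (2*E) / ‖p - intVec m‖)
          = 24*abar*E/‖p - intVec m‖ := by ring
      rw [e0]
      by_cases hm : ∀ i, |m i| ≤ 1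
      · simp only [hg, if_pos hm]
        have h24 : 24*abar*E/‖p - intVec m‖ ≤ 24*abar*E/ε₀ :=
          div_le_div_of_nonneg_left (by positivity) hε₀pos hqm
        have : (24*abar*E/‖p - intVec m‖)^d1 ≤ (24*abar*E/ε₀)^d1 :=
          pow_le_pow_left₀ (by positivity) h24 d1
        nlinarith [this]
      · simp only [hg, if_neg hm]
        push_neg at hm
        obtain ⟨i, hi⟩ := hm
        have hi2 : (2:ℤ) ≤ |m i| := by omega
        have hone : 1 ≤ ‖p - intVec m‖ := by
          have h1 : |(p - intVec m) i| ≤ ‖p - intVec m‖ := coord_le_norm _ i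
          have h2 : (p - intVec m) i = p i - (m i : ℝ) := by simp
          have h3 : (2:ℝ) ≤ |(m i : ℝ)| := by exact_mod_cast hi2
          have h4 := hpb i
          have h5 : |(m i : ℝ)| - |p i| ≤ |p i - (m i:ℝ)| := by
            rw [abs_sub_comm]
            exact abs_sub_abs_le_abs_sub _ _
          rw [h2] at h1
          linarith
        have h24 : 24*abar*E/‖p - intVec m‖ ≤ 24*abar*E := by
          rw [div_le_iff₀ hqmpos]
          nlinarith [mul_le_mul_of_nonneg_left hone (show (0:ℝ) ≤ 24*abar*E by positivity)]
        have : (24*abar*E/‖p - intVec m‖)^d1 ≤ (24*abar*E)^d1 :=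
          pow_le_pow_left₀ (by positivity) h24 d1
        nlinarith [this]
    calc volume (⋃ m ∈ F, S m) ≤ ∑ m ∈ F, volume (S m) := measure_biUnion_finset_le F S
      _ ≤ ∑ m ∈ F, ENNReal.ofReal (g m) := Finset.sum_le_sum hbound
      _ = ENNReal.ofReal (∑ m ∈ F, g m) := by
          rw [ENNReal.ofReal_sum_of_nonneg]
          intro m _
          simp only [hg]
          split <;> positivity
      _ ≤ _ := by
          apply ENNReal.ofReal_le_ofReal
          -- the real inequality
          have hsplit := Finset.sum_filter_add_sum_filter_not F (fun m => ∀ i, |m i| ≤ 1) g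
          rw [← hsplit]
          have hnear : ∑ m ∈ F.filter (fun m => ∀ i, |m i| ≤ 1), g m
              ≤ 3^(d1+1) * (4*E*(24*abar*E/ε₀)^d1) := by
            have hcard : ((F.filter (fun m => ∀ i, |m i| ≤ 1)).card : ℝ) ≤ 3^(d1+1) := by
              have hsub : F.filter (fun m => ∀ i, |m i| ≤ 1) ⊆
                  Fintype.piFinset (fun _ : Fin (d1+1) => Finset.Icc (-1 : ℤ) 1) := by
                intro m hm
                rw [Fintype.mem_piFinset]
                intro i
                rw [Finset.mem_Icc, ← abs_le]
                exact (Finset.mem_filter.1 hm).2 i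
              have hc := Finset.card_le_card hsub
              have hcc : (Fintype.piFinset (fun _ : Fin (d1+1) => Finset.Icc (-1 : ℤ) 1)).card
                  = 3^(d1+1) := by
                rw [Fintype.card_piFinset]
                simp [Int.card_Icc]
              rw [hcc] at hc
              exact_mod_cast hc
            calc ∑ m ∈ F.filter (fun m => ∀ i, |m i| ≤ 1), g m
                = ∑ m ∈ F.filter (fun m => ∀ i, |m i| ≤ 1), 4*E*(24*abar*E/ε₀)^d1 := by
                  apply Finset.sum_congr rfl
                  intro m hm
                  simp only [hg]
                  exact if_pos (Finset.mem_filter.1 hm).2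
              _ = ((F.filter (fun m => ∀ i, |m i| ≤ 1)).card : ℝ) * (4*E*(24*abar*E/ε₀)^d1) := by
                  rw [Finset.sum_const, nsmul_eq_mul]
              _ ≤ 3^(d1+1) * (4*E*(24*abar*E/ε₀)^d1) := by
                  apply mul_le_mul_of_nonneg_right hcard (by positivity)
          have hfar : ∑ m ∈ F.filter (fun m => ¬ ∀ i, |m i| ≤ 1), g m
              ≤ ((2*N+1 : ℕ) : ℝ)^(d1+1) * (4*E*(24*abar*E)^d1) := by
            have hcard : ((F.filter (fun m => ¬ ∀ i, |m i| ≤ 1)).card : ℝ)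
                ≤ ((2*N+1 : ℕ) : ℝ)^(d1+1) := by
              have hc := Finset.card_le_card (Finset.filter_subset (fun m => ¬ ∀ i, |m i| ≤ 1) F)
              have hcc : F.card = (2*N+1)^(d1+1) := by
                rw [hF, Fintype.card_piFinset]
                simp only [card_Icc_int, Finset.prod_const, Finset.card_univ, Fintype.card_fin]
              rw [hcc] at hc
              exact_mod_cast Nat.le_trans hc (le_refl _)
            calc ∑ m ∈ F.filter (fun m => ¬ ∀ i, |m i| ≤ 1), g m
                = ∑ m ∈ F.filter (fun m => ¬ ∀ i, |m i| ≤ 1), 4*E*(24*abar*E)^d1 := by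
                  apply Finset.sum_congr rfl
                  intro m hm
                  simp only [hg]
                  exact if_neg (Finset.mem_filter.1 hm).2
              _ = ((F.filter (fun m => ¬ ∀ i, |m i| ≤ 1)).card : ℝ) * (4*E*(24*abar*E)^d1) := by
                  rw [Finset.sum_const, nsmul_eq_mul]
              _ ≤ ((2*N+1:ℕ):ℝ)^(d1+1) * (4*E*(24*abar*E)^d1) := by
                  apply mul_le_mul_of_nonneg_right hcard (by positivity)
          -- bound the card power
          have hEt : (0:ℝ) ≤ E * t := by positivity
          have h2N : ((2*N+1 : ℕ) : ℝ) ≤ 7*(E*t+1) := by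
            have hceil : (⌈2*E*t⌉₊ : ℝ) < 2*E*t + 1 :=
              Nat.ceil_lt_add_one (by positivity)
            rw [hN]
            push_cast
            nlinarith
          have hbig : ((2*N+1:ℕ):ℝ)^(d1+1) ≤ 14^(d1+1) * (1 + (E*t)^(d1+1)) := by
            calc ((2*N+1:ℕ):ℝ)^(d1+1) ≤ (7*(E*t+1))^(d1+1) := pow_le_pow_left₀ (by positivity) h2N (d1+1)
              _ = 7^(d1+1) * (E*t+1)^(d1+1) := mul_pow 7 _ (d1+1)
              _ ≤ 7^(d1+1) * (2^(d1+1) * (1 + (E*t)^(d1+1))) := by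
                  apply mul_le_mul_of_nonneg_left (aux_pow (d1+1) (E*t) hEt) (by positivity)
              _ = 14^(d1+1) * (1 + (E*t)^(d1+1)) := by
                  rw [← mul_assoc, ← mul_pow]
                  norm_num
          -- algebraic rearrangement
          have ea1 : 4*E*(24*abar*E/ε₀)^d1 = 4*24^d1*E^(d1+1)*(abar/ε₀)^d1 := by
            have : 24*abar*E/ε₀ = 24*E*(abar/ε₀) := by ring
            rw [this, mul_pow, mul_pow, pow_succ]
            ring
          have ea2 : 4*E*(24*abar*E)^d1 = 4*24^d1*E^(d1+1)*abar^d1 := by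
            have : 24*abar*E = 24*E*abar := by ring
            rw [this, mul_pow, mul_pow, pow_succ]
            ring
          have ha12 : abar^d1 ≤ (abar/ε₀)^d1 := by
            apply pow_le_pow_left₀ habar.le
            rw [le_div_iff₀ hε₀pos]
            nlinarith
          have ha2n : (0:ℝ) ≤ abar^d1 := by positivity
          have hEd : (0:ℝ) < E^(d1+1) := by positivity
          have H1 : ((2*N+1:ℕ):ℝ)^(d1+1) * abar^d1 ≤ 14^(d1+1) * (1 + (E*t)^(d1+1)) * abar^d1 :=
            mul_le_mul_of_nonneg_right hbig ha2n
          have H2 : (14:ℝ)^(d1+1) * abar^d1 ≤ 14^(d1+1) * (abar/ε₀)^d1 :=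
            mul_le_mul_of_nonneg_left ha12 (by positivity)
          have hbn : (0:ℝ) ≤ (E*t)^(d1+1) := by positivity
          calc ∑ m ∈ F.filter (fun m => ∀ i, |m i| ≤ 1), g m
                + ∑ m ∈ F.filter (fun m => ¬ ∀ i, |m i| ≤ 1), g m
              ≤ 3^(d1+1) * (4*E*(24*abar*E/ε₀)^d1)
                + ((2*N+1:ℕ):ℝ)^(d1+1) * (4*E*(24*abar*E)^d1) := by linarith
            _ = 4*24^d1*E^(d1+1) * (3^(d1+1) * (abar/ε₀)^d1 + ((2*N+1:ℕ):ℝ)^(d1+1) * abar^d1) := by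
                rw [ea1, ea2]; ring
            _ ≤ 4*24^d1*E^(d1+1) * ((3^(d1+1) + 14^(d1+1)) * ((abar/ε₀)^d1 + (E*t)^(d1+1) * abar^d1)) := by
                apply mul_le_mul_of_nonneg_left _ (by positivity)
                nlinarith [H1, H2, hbn, ha2n,
                  mul_nonneg (mul_nonneg (pow_nonneg (by norm_num : (0:ℝ) ≤ 3) (d1+1)) hbn) ha2n,
                  mul_nonneg (pow_nonneg (by norm_num : (0:ℝ) ≤ 14) (d1+1)) (mul_nonneg hbn ha2n)]
            _ = 4 * 24^d1 * (3^(d1+1) + 14^(d1+1)) * E^(d1+1) * ((abar/ε₀)^d1 + (E*t)^(d1+1) * abar^d1) := by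
                ring
  · -- the no-collision property
    intro v₂ hv₂ hK y₁ y₂ hy₁ hy₂ u hu
    by_contra hcon
    push_neg at hcon
    set w : Vel (d1+1) := v₁ - v₂ with hw
    have hwle : ‖w‖ ≤ 2*E := by
      calc ‖w‖ ≤ ‖v₁‖ + ‖v₂‖ := norm_sub_le v₁ v₂
        _ ≤ 2*E := by linarith
    -- reduce to torus distance of lifts
    have hAB : flow y₁ u v₁ - flow y₂ u v₂ = (y₁ - y₂) - toTorus (u • w) := by
      rw [flow, flow]
      have : u • w = u • v₁ - u • v₂ := by rw [hw, smul_sub]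
      rw [this, toTorus_sub]
      abel
    have hstep : tdist (flow y₁ u v₁) (flow y₂ u v₂) = tdist (y₁ - y₂) (toTorus (u • w)) := by
      rw [← tdist_sub_zero (flow y₁ u v₁) (flow y₂ u v₂), hAB]
      exact tdist_sub_zero (y₁ - y₂) (toTorus (u • w))
    have hyy : tdist (x₁ - x₂) (y₁ - y₂) ≤ 2 * abar := by
      have h1 := tdist_sub_sub x₁ x₂ y₁ y₂
      have h2 : tdist x₁ y₁ ≤ abar := by rw [tdist_comm]; exact hy₁
      have h3 : tdist x₂ y₂ ≤ abar := by rw [tdist_comm]; exact hy₂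
      linarith
    have hmain : tdist (toTorus p) (toTorus (u • w)) ≤ 3 * abar := by
      rw [hpt] at *
      calc tdist (x₁ - x₂) (toTorus (u • w))
          ≤ tdist (x₁ - x₂) (y₁ - y₂) + tdist (y₁ - y₂) (toTorus (u • w)) :=
            tdist_triangle _ _ _
        _ ≤ 2 * abar + ε := by
            rw [← hstep]
            linarith [hcon]
        _ ≤ 3 * abar := by linarith
    obtain ⟨m, hm⟩ := tdist_toTorus_exists p (u • w)
    have hmle : ‖p - u • w - intVec m‖ ≤ 3 * abar := by rw [hm]; exact hmain
    -- u > 0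
    have hupos : 0 < u := by
      rcases hu.1.lt_or_eq with h | h
      · exact h
      · exfalso
        have : p - u • w - intVec m = p - intVec m := by rw [← h]; simp
        rw [this] at hmle
        have := hqlow m
        linarith
    -- w belongs to S m
    have hwS : w ∈ S m := by
      apply hSmem m w hwle u hupos
      have : u • w - (p - intVec m) = -(p - u • w - intVec m) := by abel
      rw [this, norm_neg]
      exact hmle
    -- m ∈ F
    have hmF : m ∈ F := by
      rw [hF, Fintype.mem_piFinset]
      intro i
      rw [Finset.mem_Icc, ← abs_le]
      have h1 : |(p - u • w - intVec m) i| ≤ 3 * abar :=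
        le_trans (coord_le_norm _ i) hmle
      have h2 : (p - u • w - intVec m) i = p i - u * w i - (m i : ℝ) := by
        simp
      have h3 : |u * w i| ≤ 2 * E * t := by
        have h4 : |(u • w) i| ≤ ‖u • w‖ := coord_le_norm (u • w) i
        have h5 : (u • w) i = u * w i := by simp
        have h6 : ‖u • w‖ = u * ‖w‖ := by
          rw [norm_smul, Real.norm_eq_abs, abs_of_pos hupos]
        rw [h5, h6] at h4
        calc |u * w i| ≤ u * ‖w‖ := h4
          _ ≤ t * (2*E) := by
              apply mul_le_mul hu.2 hwle (norm_nonneg w) (le_of_lt ht)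
          _ = 2 * E * t := by ring
      have h7 := hpb i
      have h8 : |(m i : ℝ)| ≤ 3 * abar + 1/2 + 2*E*t := by
        have hA := h1
        rw [h2, abs_le] at hA
        rw [abs_le] at h3 ⊢
        have h7' := abs_le.1 h7
        constructor <;> linarith [hA.1, hA.2, h3.1, h3.2, h7'.1, h7'.2]
      have h11 : 3 * abar ≤ 1/2 := by linarith
      have h12 : |(m i : ℝ)| ≤ 2*E*t + 1 := by linarith
      have h13 : (2*E*t : ℝ) + 1 ≤ (N : ℝ) := by
        rw [hN]
        push_cast
        have := Nat.le_ceil (2*E*t)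
        linarith
      have h14 : |(m i : ℝ)| ≤ (N:ℝ) := by linarith
      exact_mod_cast h14
    exact hK (Set.mem_biUnion hmF hwS)
end
end

section
/- Let d ≥ 2. There exists a constant C > 0 depending only on d with the following property. Let t > 0, E > 0, 0 < δ ≤ t, and let parameters satisfy 0 < ε ≤ ā, 6ā ≤ ε₀ ≤ 1. For any two points x₁⁰, x₂⁰ ∈ 𝕋^d with d(x₁⁰, x₂⁰) ≥ ε₀ and any velocity v₁ ∈ ℝ^d with |v₁| ≤ E, there exists a Lebesgue-measurable set K_δ ⊂ ℝ^d with Lebesgue measure |K_δ| ≤ C E ( (ε₀/δ)^{d−1} + (E t)^d E^{d−1} ε₀^{d−1} ) such that: for every v₂ ∈ ℝ^d with |v₂| ≤ E and v₁ − v₂ ∉ K_δ, and for all x₁, x₂ ∈ 𝕋^d with d(x₁, x₁⁰) ≤ ā and d(x₂, x₂⁰) ≤ ā, one has d(x₁ − u v₁, x₂ − u v₂) > ε₀ for every u ∈ [δ, t]. -/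
open MeasureTheory Real

open InnerProductSpace

noncomputable section

/-- interpret a plain function as a Euclidean vector -/
def evec {d : ℕ} (f : Fin d → ℝ) : Vel d := (WithLp.equiv 2 _).symm f

@[simp] lemma evec_apply {d : ℕ} (f : Fin d → ℝ) (i : Fin d) : evec f i = f i := rfl

lemma sqrtsum_eq_norm {d : ℕ} (f : Fin d → ℝ) :
    Real.sqrt (∑ i, f i ^ 2) = ‖evec f‖ := by
  rw [EuclideanSpace.norm_eq]
  simp [Real.norm_eq_abs, sq_abs]

lemma sqrtsum_mono {d : ℕ} (f g : Fin d → ℝ) (h : ∀ i, |f i| ≤ g i) :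
    Real.sqrt (∑ i, f i ^ 2) ≤ Real.sqrt (∑ i, g i ^ 2) := by
  apply Real.sqrt_le_sqrt
  apply Finset.sum_le_sum
  intro i _
  have := h i
  have h2 : f i ^ 2 = |f i| ^ 2 := (sq_abs _).symm
  nlinarith [abs_nonneg (f i)]

lemma tdist_sub_zero {d : ℕ} (x y : Torus d) : tdist x y = tdist (x - y) 0 := by
  unfold tdist
  congr 1
  apply Finset.sum_congr rfl
  intro i _
  rw [dist_eq_norm, dist_eq_norm]
  simp

lemma tdist_comm {d : ℕ} (x y : Torus d) : tdist x y = tdist y x := by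
  unfold tdist; simp [dist_comm]

lemma tdist_add_zero {d : ℕ} (a b : Torus d) :
    tdist (a + b) 0 ≤ tdist a 0 + tdist b 0 := by
  unfold tdist
  have h1 : Real.sqrt (∑ i, dist ((a+b) i) ((0:Torus d) i) ^ 2)
      ≤ Real.sqrt (∑ i, (dist (a i) ((0:Torus d) i) + dist (b i) ((0:Torus d) i)) ^ 2) := by
    apply sqrtsum_mono
    intro i
    rw [abs_of_nonneg dist_nonneg]
    calc dist ((a+b) i) ((0:Torus d) i) = ‖a i + b i‖ := by
          simp [dist_eq_norm]
      _ ≤ ‖a i‖ + ‖b i‖ := norm_add_le _ _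
      _ = dist (a i) ((0:Torus d) i) + dist (b i) ((0:Torus d) i) := by
          simp [dist_eq_norm]
  refine h1.trans ?_
  have h2 := norm_add_le (evec (fun i => dist (a i) ((0:Torus d) i)))
      (evec (fun i => dist (b i) ((0:Torus d) i)))
  rw [← sqrtsum_eq_norm, ← sqrtsum_eq_norm] at h2
  have h3 : Real.sqrt (∑ i, (dist (a i) ((0:Torus d) i) + dist (b i) ((0:Torus d) i)) ^ 2)
      ≤ ‖evec (fun i => dist (a i) ((0:Torus d) i)) + evec (fun i => dist (b i) ((0:Torus d) i))‖ := by
    have he : evec (fun i => dist (a i) ((0:Torus d) i)) + evec (fun i => dist (b i) ((0:Torus d) i))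
        = evec (fun i => dist (a i) ((0:Torus d) i) + dist (b i) ((0:Torus d) i)) := rfl
    rw [he, ← sqrtsum_eq_norm]
  exact h3.trans h2

lemma coord_le_norm {d : ℕ} (f : Vel d) (i : Fin d) : |f i| ≤ ‖f‖ := by
  rw [EuclideanSpace.norm_eq, ← Real.sqrt_sq_eq_abs]
  apply Real.sqrt_le_sqrt
  calc f i ^ 2 = ‖f i‖ ^ 2 := by rw [Real.norm_eq_abs, sq_abs]
    _ ≤ ∑ j, ‖f j‖ ^ 2 :=
      Finset.single_le_sum (fun j _ => sq_nonneg ‖f j‖) (Finset.mem_univ i)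

lemma proj_le_norm {d : ℕ} (u v : Vel d) (hu : ‖u‖ = 1) :
    ‖v - ⟪v, u⟫_ℝ • u‖ ≤ ‖v‖ := by
  set c := ⟪v, u⟫_ℝ with hc
  have h1 : ‖v - c • u‖ ^ 2 = ‖v‖ ^ 2 - c ^ 2 := by
    rw [norm_sub_sq_real, real_inner_smul_right, norm_smul, hu]
    simp [← hc]
    ring
  nlinarith [norm_nonneg (v - c • u), norm_nonneg v, sq_nonneg c]

lemma cyl_vol {d : ℕ} (hd : 1 ≤ d) (u : Vel d) (hu : ‖u‖ = 1) (L ρ : ℝ)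
    (hL : 0 ≤ L) (hρ : 0 ≤ ρ) :
    volume {w : Vel d | |⟪w, u⟫_ℝ| ≤ L ∧ ‖w - ⟪w, u⟫_ℝ • u‖ ≤ ρ}
      ≤ ENNReal.ofReal ((2*L) * (2*ρ)^(d-1)) := by
  classical
  have hd0 : 0 < d := hd
  set i0 : Fin d := ⟨0, hd0⟩ with hi0
  set e₀ : Vel d := EuclideanSpace.single i0 1 with he₀def
  have he₀ : ‖e₀‖ = 1 := by
    rw [he₀def, EuclideanSpace.norm_single]; norm_num
  set f : Vel d ≃ₗᵢ[ℝ] Vel d := Submodule.reflection (ℝ ∙ (u - e₀))ᗮ with hf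
  have hfu : f u = e₀ := Submodule.reflection_sub (hu.trans he₀.symm)
  have hinner : ∀ w : Vel d, ⟪w, u⟫_ℝ = ⟪f w, e₀⟫_ℝ := by
    intro w
    conv_rhs => rw [← hfu]
    exact (f.inner_map_map w u).symm
  set T : Set (Vel d) := {x | |⟪x, e₀⟫_ℝ| ≤ L ∧ ‖x - ⟪x, e₀⟫_ℝ • e₀‖ ≤ ρ} with hT
  have hST : {w : Vel d | |⟪w, u⟫_ℝ| ≤ L ∧ ‖w - ⟪w, u⟫_ℝ • u‖ ≤ ρ} = ⇑f ⁻¹' T := by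
    ext w
    simp only [Set.mem_setOf_eq, Set.mem_preimage, hT]
    rw [← hinner w]
    have : ‖w - ⟪w, u⟫_ℝ • u‖ = ‖f w - ⟪w, u⟫_ℝ • e₀‖ := by
      rw [← hfu, ← f.map_smul, ← f.map_sub, f.norm_map]
    rw [this]
  have c1 : Continuous fun x : Vel d => ⟪x, e₀⟫_ℝ :=
    continuous_inner.comp (continuous_id.prodMk continuous_const)
  have c2 : Continuous fun x : Vel d => ‖x - ⟪x, e₀⟫_ℝ • e₀‖ :=
    (continuous_id.sub (c1.smul continuous_const)).norm
  have hTmeas : MeasurableSet T :=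
    ((isClosed_le c1.abs continuous_const).inter (isClosed_le c2 continuous_const)).measurableSet
  rw [hST, f.measurePreserving.measure_preimage hTmeas.nullMeasurableSet]
  set B : Fin d → ℝ := fun i => if i = i0 then L else ρ with hB
  set Box : Set (Fin d → ℝ) := Set.univ.pi fun i => Set.Icc (-(B i)) (B i) with hBox
  have hsub : T ⊆ (MeasurableEquiv.toLp 2 (Fin d → ℝ)).symm ⁻¹' Box := by
    intro x hx
    obtain ⟨h1, h2⟩ := hx
    intro i _
    have hxi : (MeasurableEquiv.toLp 2 (Fin d → ℝ)).symm x i = x i := rfl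
    have hinner0 : ⟪x, e₀⟫_ℝ = x i0 := by
      rw [he₀def, EuclideanSpace.inner_single_right]
      simp
    rw [hxi]
    by_cases hii : i = i0
    · subst hii
      rw [hB]; simp only [if_pos rfl]
      rw [hinner0] at h1
      exact abs_le.mp h1
    · have hcoord : (x - ⟪x, e₀⟫_ℝ • e₀) i = x i := by
        have : e₀ i = 0 := by
          rw [he₀def, EuclideanSpace.single_apply, if_neg hii]
        simp [this]
      have := (coord_le_norm (x - ⟪x, e₀⟫_ℝ • e₀) i).trans h2
      rw [hcoord] at this
      rw [hB]; simp only [if_neg hii]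
      exact abs_le.mp this
  have hBoxvol : volume Box = ENNReal.ofReal ((2*L) * (2*ρ)^(d-1)) := by
    rw [hBox, volume_pi_pi]
    have : ∀ i, volume (Set.Icc (-(B i)) (B i)) = ENNReal.ofReal (2 * B i) := by
      intro i
      rw [Real.volume_Icc]
      congr 1
      ring
    simp_rw [this]
    rw [← ENNReal.ofReal_prod_of_nonneg]
    · congr 1
      rw [← Finset.mul_prod_erase Finset.univ (fun i => 2 * B i) (Finset.mem_univ i0)]
      have h1 : 2 * B i0 = 2 * L := by rw [hB]; simp
      have h2 : ∀ i ∈ Finset.univ.erase i0, 2 * B i = 2 * ρ := by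
        intro i hi
        rw [hB]; simp [Finset.mem_erase.mp hi |>.1]
      rw [h1, Finset.prod_congr rfl h2, Finset.prod_const]
      have : (Finset.univ.erase i0).card = d - 1 := by
        rw [Finset.card_erase_of_mem (Finset.mem_univ i0), Finset.card_univ, Fintype.card_fin]
      rw [this]
    · intro i _
      rw [hB]
      by_cases hii : i = i0 <;> simp [hii] <;> linarith
  calc volume T ≤ volume ((MeasurableEquiv.toLp 2 (Fin d → ℝ)).symm ⁻¹' Box) :=
        measure_mono hsub
    _ = volume Box := by
        rw [(EuclideanSpace.volume_preserving_symm_measurableEquiv_toLp (Fin d)).measure_preimage]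
        exact (MeasurableSet.univ_pi fun i => measurableSet_Icc).nullMeasurableSet
    _ = _ := hBoxvol

lemma addcircle_lift (z : AddCircle (1:ℝ)) : ∃ r : ℝ, ((r : ℝ) : AddCircle (1:ℝ)) = z ∧ |r| ≤ 1 := by
  induction z using QuotientAddGroup.induction_on with
  | H r' =>
    refine ⟨r' - round r', ?_, ?_⟩
    · have h0 : ((round r' : ℝ) : AddCircle (1:ℝ)) = 0 := by
        rw [QuotientAddGroup.eq_zero_iff]
        exact @AddSubgroup.intCast_mem_zmultiples_one ℝ _ (round r')
      rw [QuotientAddGroup.mk_sub, h0, sub_zero]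
    · have := abs_sub_round r'; linarith

lemma addcircle_norm_round (r : ℝ) : ‖((r:ℝ) : AddCircle (1:ℝ))‖ = |r - round r| := by
  rw [AddCircle.norm_eq]; norm_num

lemma addcircle_norm_le (r : ℝ) : ‖((r:ℝ) : AddCircle (1:ℝ))‖ ≤ |r| := by
  rw [addcircle_norm_round]
  simpa using round_le r 0

set_option maxHeartbeats 2000000 in
/-- Geometric control of free trajectories on the torus (separation after time `δ`):
given `x₁⁰, x₂⁰` at distance at least `ε₀` and `|v₁| ≤ E`, there is a bad set `K_δ` of
velocities of measure at most `C E ((ε₀/δ)^{d-1} + (Et)^d E^{d-1} ε₀^{d-1})` such that if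
`v₁ - v₂ ∉ K_δ`, `|v₂| ≤ E`, and `x₁, x₂` are `ā`-close to `x₁⁰, x₂⁰`, then
`d(x₁ - u v₁, x₂ - u v₂) > ε₀` for all `u ∈ [δ,t]`. -/
theorem free_flow_separation
    (d : ℕ) (hd : 2 ≤ d) :
    ∃ C > (0:ℝ), ∀ t E δ ε abar ε₀ : ℝ,
      0 < t → 0 < E → 0 < δ → δ ≤ t → 0 < ε → ε ≤ abar → 6 * abar ≤ ε₀ → ε₀ ≤ 1 →
      ∀ (x₁ x₂ : Torus d) (v₁ : Vel d), ε₀ ≤ tdist x₁ x₂ → ‖v₁‖ ≤ E →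
      ∃ K : Set (Vel d), MeasurableSet K ∧
        volume K ≤ ENNReal.ofReal
          (C * E * ((ε₀ / δ) ^ (d - 1) + (E * t) ^ d * E ^ (d - 1) * ε₀ ^ (d - 1))) ∧
        ∀ v₂ : Vel d, ‖v₂‖ ≤ E → v₁ - v₂ ∉ K →
          ∀ y₁ y₂ : Torus d, tdist y₁ x₁ ≤ abar → tdist y₂ x₂ ≤ abar →
            ∀ u ∈ Set.Icc δ t, ε₀ < tdist (flow y₁ u v₁) (flow y₂ u v₂) := by
  classical
  refine ⟨(300:ℝ)^(d+1), by positivity, ?_⟩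
  intro t E δ ε abar ε₀ ht hE hδ hδt hε hεa h6a hε₀1 x₁ x₂ v₁ hx hv₁
  have hd1 : 1 ≤ d := le_trans (by norm_num) hd
  have habar : 0 < abar := lt_of_lt_of_le hε hεa
  have hε₀ : 0 < ε₀ := lt_of_lt_of_le (by linarith) h6a
  set ε' : ℝ := ε₀ + 2*abar with hε'def
  have hε'pos : 0 < ε' := by positivity
  have hε'le : ε' ≤ 4/3 * ε₀ := by linarith
  have hε'43 : ε' ≤ 4/3 := by linarith
  -- lifts of x₁ - x₂
  have hlift := fun i => addcircle_lift (x₁ i - x₂ i)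
  choose p₀ hp₀ hp₀le using hlift
  set P : (Fin d → ℤ) → Vel d := fun m => evec (fun i => p₀ i + (m i : ℝ)) with hPdef
  have hPcoe : ∀ (m : Fin d → ℤ) (i : Fin d),
      ((P m i : ℝ) : AddCircle (1:ℝ)) = x₁ i - x₂ i := by
    intro m i
    have h0 : (((m i : ℤ) : ℝ) : AddCircle (1:ℝ)) = 0 := by
      rw [QuotientAddGroup.eq_zero_iff]
      exact @AddSubgroup.intCast_mem_zmultiples_one ℝ _ (m i)
    have : (P m i : ℝ) = p₀ i + ((m i : ℤ) : ℝ) := rfl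
    rw [this, QuotientAddGroup.mk_add, h0, add_zero, hp₀]
  -- lower bound on ‖P m‖
  have hPlow : ∀ m, ε₀ ≤ ‖P m‖ := by
    intro m
    have h1 : tdist x₁ x₂ ≤ Real.sqrt (∑ i, (|P m i|) ^ 2) := by
      unfold tdist
      apply sqrtsum_mono
      intro i
      rw [abs_of_nonneg dist_nonneg, dist_eq_norm, ← hPcoe m i]
      exact addcircle_norm_le _
    have h2 : Real.sqrt (∑ i, (|P m i|) ^ 2) = ‖P m‖ := by
      have : ∀ i, (|P m i|)^2 = (P m i)^2 := fun i => sq_abs _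
      simp_rw [this]
      rw [sqrtsum_eq_norm]
      rfl
    exact hx.trans (h1.trans h2.le)
  have hPpos : ∀ m, 0 < ‖P m‖ := fun m => lt_of_lt_of_le hε₀ (hPlow m)
  set uv : (Fin d → ℤ) → Vel d := fun m => ‖P m‖⁻¹ • P m with huvdef
  have huv : ∀ m, ‖uv m‖ = 1 := by
    intro m
    rw [huvdef]
    exact norm_smul_inv_norm (norm_pos_iff.mp (hPpos m))
  have hPuv : ∀ m, ‖P m‖ • uv m = P m := by
    intro m
    rw [huvdef, smul_smul, mul_inv_cancel₀ (hPpos m).ne', one_smul]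
  set ρ : (Fin d → ℤ) → ℝ :=
    fun m => if 3 ≤ ‖P m‖ then min (ε'/δ) (2*E*ε') else ε'/δ with hρdef
  have hρ0 : ∀ m, 0 ≤ ρ m := by
    intro m
    simp only [hρdef]
    split
    · exact le_min (by positivity) (by positivity)
    · positivity
  have hρle : ∀ m, ρ m ≤ ε'/δ := by
    intro m
    simp only [hρdef]
    split
    · exact min_le_left _ _
    · exact le_refl _
  set Cy : (Fin d → ℤ) → Set (Vel d) :=
    fun m => {w : Vel d | |⟪w, uv m⟫_ℝ| ≤ 2*E ∧ ‖w - ⟪w, uv m⟫_ℝ • uv m‖ ≤ ρ m} with hCydef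
  set R : ℤ := ⌈2*E*t⌉ + 3 with hRdef
  have hR1 : (R : ℝ) ≥ 2*E*t + 3 := by
    rw [hRdef]
    push_cast
    have := Int.le_ceil (2*E*t)
    linarith
  have hR2 : (R : ℝ) ≤ 2*E*t + 4 := by
    rw [hRdef]
    push_cast
    have := Int.ceil_lt_add_one (2*E*t)
    linarith
  set M : Finset (Fin d → ℤ) := Fintype.piFinset fun _ => Finset.Icc (-R) R with hMdef
  refine ⟨⋃ m ∈ M, Cy m, ?_, ?_, ?_⟩
  · -- measurability
    apply M.measurableSet_biUnion
    intro m _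
    have c1 : Continuous fun x : Vel d => ⟪x, uv m⟫_ℝ :=
      continuous_inner.comp (continuous_id.prodMk continuous_const)
    have c2 : Continuous fun x : Vel d => ‖x - ⟪x, uv m⟫_ℝ • uv m‖ :=
      (continuous_id.sub (c1.smul continuous_const)).norm
    exact ((isClosed_le c1.abs continuous_const).inter
      (isClosed_le c2 continuous_const)).measurableSet
  · -- measure bound
    have hA0 : (0:ℝ) ≤ (ε₀/δ)^(d-1) := by positivity
    have hB0 : (0:ℝ) ≤ (E*t)^d * E^(d-1) * ε₀^(d-1) := by positivity
    have hterm0 : ∀ m, (0:ℝ) ≤ (2*(2*E)) * (2*ρ m)^(d-1) := by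
      intro m
      apply mul_nonneg (by positivity)
      exact pow_nonneg (by linarith [hρ0 m]) _
    -- counting : cardinality of integer boxes
    have hcardIcc : ∀ a : ℤ, 0 ≤ a → ((Finset.Icc (-a) a).card : ℝ) = 2*(a:ℝ)+1 := by
      intro a ha
      rw [Int.card_Icc]
      have h1 : (0:ℤ) ≤ a + 1 - -a := by linarith
      have h2 : ((a + 1 - -a).toNat : ℤ) = a + 1 - -a := Int.toNat_of_nonneg h1
      have h3 : (((a + 1 - -a).toNat : ℤ) : ℝ) = ((a + 1 - -a : ℤ) : ℝ) := by exact_mod_cast h2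
      push_cast at h3 ⊢
      linarith
    have hR0 : (0:ℤ) ≤ R := by
      have : (0:ℝ) ≤ (R:ℝ) := by nlinarith
      exact_mod_cast this
    have hMcard : (M.card : ℝ) = (2*(R:ℝ)+1)^d := by
      rw [hMdef, Fintype.card_piFinset]
      rw [Finset.prod_const, Finset.card_univ, Fintype.card_fin]
      push_cast
      rw [hcardIcc R hR0]
    -- bound on wide part
    set Mw : Finset (Fin d → ℤ) := M.filter (fun m => ¬ (3 ≤ ‖P m‖)) with hMwdef
    set Mn : Finset (Fin d → ℤ) := M.filter (fun m => (3 ≤ ‖P m‖)) with hMndef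
    have hMwcard : (Mw.card : ℝ) ≤ 9^d := by
      have hsubW : Mw ⊆ Fintype.piFinset fun _ : Fin d => Finset.Icc (-4 : ℤ) 4 := by
        intro m hm
        have hm3 : ‖P m‖ < 3 := not_le.mp (Finset.mem_filter.mp hm).2
        rw [Fintype.mem_piFinset]
        intro i
        have h1 : |(m i : ℝ)| ≤ |P m i| + |p₀ i| := by
          have : (m i : ℝ) = P m i - p₀ i := by
            simp [hPdef]
          rw [this]
          exact abs_sub _ _
        have h2 : |P m i| ≤ ‖P m‖ := coord_le_norm _ i
        have h4 : |(m i : ℝ)| ≤ 4 := by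
          have := hp₀le i
          linarith
        have h5 : |m i| ≤ 4 := by exact_mod_cast (by push_cast; exact h4 : |((m i : ℤ) : ℝ)| ≤ ((4:ℤ):ℝ))
        rw [Finset.mem_Icc]
        constructor <;> [linarith [abs_le.mp h5 |>.1]; exact abs_le.mp h5 |>.2]
      have := Finset.card_le_card hsubW
      have hc9 : ((Fintype.piFinset fun _ : Fin d => Finset.Icc (-4 : ℤ) 4).card : ℝ) = 9^d := by
        rw [Fintype.card_piFinset, Finset.prod_const, Finset.card_univ, Fintype.card_fin]
        push_cast
        rw [hcardIcc 4 (by norm_num)]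
        norm_num
      calc (Mw.card : ℝ) ≤ _ := by exact_mod_cast this
        _ = 9^d := hc9
    -- generic constants
    have h3d : (4:ℝ) ≤ 3^d := by
      calc (4:ℝ) ≤ 3^2 := by norm_num
        _ ≤ 3^d := pow_le_pow_right₀ (by norm_num) hd
    have h3d1 : (3:ℝ)^(d-1) ≤ 3^d := pow_le_pow_right₀ (by norm_num) (Nat.sub_le d 1)
    have hwide : ∑ m ∈ Mw, (2*(2*E)) * (2*ρ m)^(d-1) ≤ (300:ℝ)^d * (E * ((ε₀/δ)^(d-1))) := by
      have hterm : ∀ m ∈ Mw, (2*(2*E)) * (2*ρ m)^(d-1) ≤ (4*E) * (3^(d-1) * (ε₀/δ)^(d-1)) := by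
        intro m hm
        have hm3 : ¬ (3 ≤ ‖P m‖) := (Finset.mem_filter.mp hm).2
        have hρm : ρ m = ε'/δ := by simp only [hρdef]; rw [if_neg hm3]
        have hle : 2 * ρ m ≤ 3 * (ε₀/δ) := by
          rw [hρm]
          have h23 : (2*ε')/δ ≤ (3*ε₀)/δ := (div_le_div_iff_of_pos_right hδ).mpr (by linarith)
          calc 2*(ε'/δ) = (2*ε')/δ := by ring
            _ ≤ (3*ε₀)/δ := h23
            _ = 3*(ε₀/δ) := by ring
        have hpow : (2*ρ m)^(d-1) ≤ 3^(d-1) * (ε₀/δ)^(d-1) := by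
          rw [← mul_pow]
          exact pow_le_pow_left₀ (by linarith [hρ0 m]) hle _
        have h2 := mul_le_mul_of_nonneg_left hpow (show (0:ℝ) ≤ 2*(2*E) by positivity)
        linarith
      calc ∑ m ∈ Mw, (2*(2*E)) * (2*ρ m)^(d-1)
          ≤ Mw.card • ((4*E) * (3^(d-1) * (ε₀/δ)^(d-1))) := Finset.sum_le_card_nsmul _ _ _ hterm
        _ = (Mw.card : ℝ) * ((4*E) * (3^(d-1) * (ε₀/δ)^(d-1))) := by rw [nsmul_eq_mul]
        _ ≤ 9^d * ((4*E) * (3^(d-1) * (ε₀/δ)^(d-1))) := by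
            apply mul_le_mul_of_nonneg_right hMwcard
            positivity
        _ ≤ (300:ℝ)^d * (E * ((ε₀/δ)^(d-1))) := by
            have hc : (9:ℝ)^d * 4 * 3^(d-1) ≤ 300^d := by
              calc (9:ℝ)^d * 4 * 3^(d-1) = 9^d * (4 * 3^(d-1)) := by ring
                _ ≤ 9^d * (3^d * 3^d) := by
                    apply mul_le_mul_of_nonneg_left _ (by positivity)
                    exact mul_le_mul h3d h3d1 (by positivity) (by positivity)
                _ = 81^d := by rw [← mul_pow, ← mul_pow]; norm_num
                _ ≤ 300^d := pow_le_pow_left₀ (by norm_num) (by norm_num) d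
            calc (9:ℝ)^d * ((4*E) * (3^(d-1) * (ε₀/δ)^(d-1)))
                = ((9:ℝ)^d * 4 * 3^(d-1)) * (E * ((ε₀/δ)^(d-1))) := by ring
              _ ≤ 300^d * (E * ((ε₀/δ)^(d-1))) :=
                  mul_le_mul_of_nonneg_right hc (mul_nonneg hE.le hA0)
    -- narrow part
    have hnarrow : ∑ m ∈ Mn, (2*(2*E)) * (2*ρ m)^(d-1)
        ≤ (300:ℝ)^d * (E * ((ε₀/δ)^(d-1)) + E * ((E*t)^d * E^(d-1) * ε₀^(d-1))) := by
      have hMncard : (Mn.card : ℝ) ≤ (2*(R:ℝ)+1)^d := by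
        rw [← hMcard]
        exact_mod_cast Finset.card_le_card (Finset.filter_subset _ _)
      by_cases hEt : 1 ≤ E*t
      · -- Et large : use angular bound
        have hcard13 : (Mn.card : ℝ) ≤ (13*(E*t))^d := by
          refine hMncard.trans (pow_le_pow_left₀ (by positivity) ?_ d)
          nlinarith
        have hterm : ∀ m ∈ Mn, (2*(2*E)) * (2*ρ m)^(d-1) ≤ (4*E) * (6^(d-1) * (E^(d-1) * ε₀^(d-1))) := by
          intro m hm
          have hm3 : (3 ≤ ‖P m‖) := (Finset.mem_filter.mp hm).2
          have hρm : ρ m ≤ 2*E*ε' := by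
            simp only [hρdef]; rw [if_pos hm3]; exact min_le_right _ _
          have hle : 2 * ρ m ≤ 6 * (E * ε₀) := by nlinarith
          have hpow : (2*ρ m)^(d-1) ≤ 6^(d-1) * (E^(d-1) * ε₀^(d-1)) := by
            rw [← mul_pow, ← mul_pow]
            exact pow_le_pow_left₀ (by linarith [hρ0 m]) hle _
          have h2 := mul_le_mul_of_nonneg_left hpow (show (0:ℝ) ≤ 2*(2*E) by positivity)
          linarith
        calc ∑ m ∈ Mn, (2*(2*E)) * (2*ρ m)^(d-1)
            ≤ Mn.card • ((4*E) * (6^(d-1) * (E^(d-1) * ε₀^(d-1)))) := Finset.sum_le_card_nsmul _ _ _ hterm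
          _ = (Mn.card : ℝ) * ((4*E) * (6^(d-1) * (E^(d-1) * ε₀^(d-1)))) := by rw [nsmul_eq_mul]
          _ ≤ (13*(E*t))^d * ((4*E) * (6^(d-1) * (E^(d-1) * ε₀^(d-1)))) := by
              apply mul_le_mul_of_nonneg_right hcard13
              positivity
          _ ≤ (300:ℝ)^d * (E * ((E*t)^d * E^(d-1) * ε₀^(d-1))) := by
              have h6d : (6:ℝ)^(d-1) ≤ 6^d := pow_le_pow_right₀ (by norm_num) (Nat.sub_le d 1)
              have hc : (13:ℝ)^d * 4 * 6^(d-1) ≤ 300^d := by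
                calc (13:ℝ)^d * 4 * 6^(d-1) = 13^d * (4 * 6^(d-1)) := by ring
                  _ ≤ 13^d * (3^d * 6^d) := by
                      apply mul_le_mul_of_nonneg_left _ (by positivity)
                      exact mul_le_mul h3d h6d (by positivity) (by positivity)
                  _ = 234^d := by rw [← mul_pow, ← mul_pow]; norm_num
                  _ ≤ 300^d := pow_le_pow_left₀ (by norm_num) (by norm_num) d
              have hexp : (13*(E*t))^d = 13^d * (E*t)^d := by rw [mul_pow]
              rw [hexp]
              calc (13:ℝ)^d * (E*t)^d * ((4*E) * (6^(d-1) * (E^(d-1) * ε₀^(d-1))))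
                  = ((13:ℝ)^d * 4 * 6^(d-1)) * (E * ((E*t)^d * E^(d-1) * ε₀^(d-1))) := by ring
                _ ≤ 300^d * (E * ((E*t)^d * E^(d-1) * ε₀^(d-1))) :=
                    mul_le_mul_of_nonneg_right hc (mul_nonneg hE.le hB0)
          _ ≤ _ := by
              apply mul_le_mul_of_nonneg_left _ (by positivity : (0:ℝ) ≤ 300^d)
              have hEA : (0:ℝ) ≤ E * ((ε₀/δ)^(d-1)) := mul_nonneg hE.le hA0
              linarith
      · -- Et small : few lattice points, radial bound
        have hR13 : (2*(R:ℝ)+1) ≤ 13 := by nlinarith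
        have hcard13 : (Mn.card : ℝ) ≤ 13^d := by
          refine hMncard.trans (pow_le_pow_left₀ (by positivity) hR13 d)
        have hterm : ∀ m ∈ Mn, (2*(2*E)) * (2*ρ m)^(d-1) ≤ (4*E) * (3^(d-1) * (ε₀/δ)^(d-1)) := by
          intro m hm
          have hle : 2 * ρ m ≤ 3 * (ε₀/δ) := by
            have h1 := hρle m
            have h23 : (2*ε')/δ ≤ (3*ε₀)/δ := (div_le_div_iff_of_pos_right hδ).mpr (by linarith)
            calc 2 * ρ m ≤ 2*(ε'/δ) := by linarith
              _ = (2*ε')/δ := by ring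
              _ ≤ (3*ε₀)/δ := h23
              _ = 3*(ε₀/δ) := by ring
          have hpow : (2*ρ m)^(d-1) ≤ 3^(d-1) * (ε₀/δ)^(d-1) := by
            rw [← mul_pow]
            exact pow_le_pow_left₀ (by linarith [hρ0 m]) hle _
          nlinarith [pow_nonneg (by linarith [hρ0 m] : (0:ℝ) ≤ 2*ρ m) (d-1)]
        calc ∑ m ∈ Mn, (2*(2*E)) * (2*ρ m)^(d-1)
            ≤ Mn.card • ((4*E) * (3^(d-1) * (ε₀/δ)^(d-1))) := Finset.sum_le_card_nsmul _ _ _ hterm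
          _ = (Mn.card : ℝ) * ((4*E) * (3^(d-1) * (ε₀/δ)^(d-1))) := by rw [nsmul_eq_mul]
          _ ≤ 13^d * ((4*E) * (3^(d-1) * (ε₀/δ)^(d-1))) := by
              apply mul_le_mul_of_nonneg_right hcard13
              positivity
          _ ≤ (300:ℝ)^d * (E * ((ε₀/δ)^(d-1))) := by
              have hc : (13:ℝ)^d * 4 * 3^(d-1) ≤ 300^d := by
                calc (13:ℝ)^d * 4 * 3^(d-1) = 13^d * (4 * 3^(d-1)) := by ring
                  _ ≤ 13^d * (3^d * 3^d) := by
                      apply mul_le_mul_of_nonneg_left _ (by positivity)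
                      exact mul_le_mul h3d h3d1 (by positivity) (by positivity)
                  _ = 117^d := by rw [← mul_pow, ← mul_pow]; norm_num
                  _ ≤ 300^d := pow_le_pow_left₀ (by norm_num) (by norm_num) d
              calc (13:ℝ)^d * ((4*E) * (3^(d-1) * (ε₀/δ)^(d-1)))
                  = ((13:ℝ)^d * 4 * 3^(d-1)) * (E * ((ε₀/δ)^(d-1))) := by ring
                _ ≤ 300^d * (E * ((ε₀/δ)^(d-1))) :=
                    mul_le_mul_of_nonneg_right hc (mul_nonneg hE.le hA0)
          _ ≤ _ := by
              apply mul_le_mul_of_nonneg_left _ (by positivity : (0:ℝ) ≤ 300^d)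
              have hEB : (0:ℝ) ≤ E * ((E*t)^d * E^(d-1) * ε₀^(d-1)) := mul_nonneg hE.le hB0
              linarith
    have hreal : ∑ m ∈ M, (2*(2*E)) * (2*ρ m)^(d-1)
        ≤ (300:ℝ)^(d+1) * E * ((ε₀/δ)^(d-1) + (E*t)^d * E^(d-1) * ε₀^(d-1)) := by
      have hsplit := Finset.sum_filter_add_sum_filter_not M (fun m => (3 ≤ ‖P m‖))
        (fun m => (2*(2*E)) * (2*ρ m)^(d-1))
      have h300 : (300:ℝ)^(d+1) = 300 * 300^d := by rw [pow_succ]; ring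
      have hEA : (0:ℝ) ≤ E * ((ε₀/δ)^(d-1)) := mul_nonneg hE.le hA0
      have hEB : (0:ℝ) ≤ E * ((E*t)^d * E^(d-1) * ε₀^(d-1)) := mul_nonneg hE.le hB0
      have h300p : (0:ℝ) < 300^d := pow_pos (by norm_num) d
      calc ∑ m ∈ M, (2*(2*E)) * (2*ρ m)^(d-1)
          = ∑ m ∈ Mn, (2*(2*E)) * (2*ρ m)^(d-1) + ∑ m ∈ Mw, (2*(2*E)) * (2*ρ m)^(d-1) := hsplit.symm
        _ ≤ (300:ℝ)^d * (E * ((ε₀/δ)^(d-1)) + E * ((E*t)^d * E^(d-1) * ε₀^(d-1)))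
              + (300:ℝ)^d * (E * ((ε₀/δ)^(d-1))) := add_le_add hnarrow hwide
        _ ≤ _ := by
            rw [h300]
            nlinarith [mul_nonneg h300p.le hEA, mul_nonneg h300p.le hEB]
    calc volume (⋃ m ∈ M, Cy m)
        ≤ ∑ m ∈ M, volume (Cy m) := measure_biUnion_finset_le M Cy
      _ ≤ ∑ m ∈ M, ENNReal.ofReal ((2*(2*E)) * (2*ρ m)^(d-1)) := by
          apply Finset.sum_le_sum
          intro m _
          exact cyl_vol hd1 (uv m) (huv m) (2*E) (ρ m) (by positivity) (hρ0 m)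
      _ = ENNReal.ofReal (∑ m ∈ M, (2*(2*E)) * (2*ρ m)^(d-1)) :=
          (ENNReal.ofReal_sum_of_nonneg (fun m _ => hterm0 m)).symm
      _ ≤ _ := ENNReal.ofReal_le_ofReal hreal
  · -- separation
    intro v₂ hv₂ hK y₁ y₂ hy₁ hy₂ s hs
    by_contra hcon
    push_neg at hcon
    apply hK
    set w : Vel d := v₁ - v₂ with hwdef
    have hw2E : ‖w‖ ≤ 2*E := by
      calc ‖w‖ ≤ ‖v₁‖ + ‖v₂‖ := norm_sub_le _ _
        _ ≤ 2*E := by linarith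
    obtain ⟨hδs, hst⟩ := hs
    have hs0 : 0 < s := lt_of_lt_of_le hδ hδs
    have hsw : ‖s • w‖ ≤ s * (2*E) := by
      rw [norm_smul, Real.norm_eq_abs, abs_of_pos hs0]
      exact mul_le_mul_of_nonneg_left hw2E hs0.le
    -- torus algebra
    have htT : toTorus (s•v₁) - toTorus (s•v₂) = toTorus (s•w) := by
      funext i
      show ((s•v₁) i : AddCircle (1:ℝ)) - ((s•v₂) i : AddCircle (1:ℝ))
          = (((s•w) i : ℝ) : AddCircle (1:ℝ))
      rw [← QuotientAddGroup.mk_sub]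
      congr 1
      show s * v₁ i - s * v₂ i = s * (v₁ i - v₂ i)
      ring
    have hflow : flow y₁ s v₁ - flow y₂ s v₂ = (y₁ - y₂) - toTorus (s • w) := by
      unfold flow
      rw [← htT]
      abel
    have hBd : tdist ((y₁ - y₂) - toTorus (s • w)) 0 ≤ ε₀ := by
      rw [← hflow, ← tdist_sub_zero]
      exact hcon
    have hAd : tdist ((x₁ - x₂) - toTorus (s • w)) 0 ≤ ε' := by
      have hdecomp : (x₁ - x₂) - toTorus (s • w)
          = (((y₁ - y₂) - toTorus (s • w)) + (x₁ - y₁)) + (y₂ - x₂) := by abel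
      rw [hdecomp]
      have t1 := tdist_add_zero (((y₁ - y₂) - toTorus (s • w)) + (x₁ - y₁)) (y₂ - x₂)
      have t2 := tdist_add_zero ((y₁ - y₂) - toTorus (s • w)) (x₁ - y₁)
      have e1 : tdist (x₁ - y₁) 0 ≤ abar := by
        rw [← tdist_sub_zero, tdist_comm]
        exact hy₁
      have e2 : tdist (y₂ - x₂) 0 ≤ abar := by
        rw [← tdist_sub_zero]
        exact hy₂
      rw [hε'def]
      linarith
    -- lift
    set m : Fin d → ℤ := fun i => -round (p₀ i - s * w i) with hmdef
    set q : Fin d → ℝ := fun i => p₀ i - s * w i - round (p₀ i - s * w i) with hqdef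
    have hqPm : P m - s • w = evec q := by
      ext i
      show (p₀ i + ((m i : ℤ) : ℝ)) - s * w i = q i
      simp only [hmdef, hqdef]
      push_cast
      ring
    have hnormq : ‖P m - s • w‖ ≤ ε' := by
      rw [hqPm, ← sqrtsum_eq_norm]
      have heq : ∀ i, q i ^ 2 = dist (((x₁ - x₂) - toTorus (s • w)) i) ((0 : Torus d) i) ^ 2 := by
        intro i
        have h1 : dist (((x₁ - x₂) - toTorus (s • w)) i) ((0 : Torus d) i)
            = ‖((p₀ i - s * w i : ℝ) : AddCircle (1:ℝ))‖ := by
          rw [dist_eq_norm]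
          congr 1
          show (x₁ i - x₂ i) - (((s • w) i : ℝ) : AddCircle (1:ℝ)) - 0 = _
          rw [sub_zero, ← hp₀ i, ← QuotientAddGroup.mk_sub]
          rfl
        rw [h1, addcircle_norm_round, ← sq_abs (q i)]
      calc Real.sqrt (∑ i, q i ^ 2)
          = tdist ((x₁ - x₂) - toTorus (s • w)) 0 := by
            unfold tdist
            congr 1
            exact Finset.sum_congr rfl (fun i _ => heq i)
        _ ≤ ε' := hAd
    have hswPm : ‖s • w - P m‖ ≤ ε' := by
      rw [norm_sub_rev]
      exact hnormq
    have hPm_s : ‖P m‖ ≤ ε' + s * (2*E) := by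
      have h1 := norm_add_le (P m - s • w) (s • w)
      rw [sub_add_cancel] at h1
      linarith
    -- membership of m
    have hmM : m ∈ M := by
      rw [hMdef, Fintype.mem_piFinset]
      intro i
      have h1 : |(m i : ℝ)| ≤ ‖P m‖ + 1 := by
        have hmi : (m i : ℝ) = P m i - p₀ i := by simp [hPdef]
        rw [hmi]
        calc |P m i - p₀ i| ≤ |P m i| + |p₀ i| := abs_sub _ _
          _ ≤ ‖P m‖ + 1 := add_le_add (coord_le_norm _ i) (hp₀le i)
      have h2 : |(m i : ℝ)| ≤ (R:ℝ) := by
        have hs2E : s * (2*E) ≤ 2*E*t := by nlinarith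
        have : |(m i : ℝ)| ≤ 2*E*t + 3 := by linarith
        linarith
      have h4 : |m i| ≤ R := by
        have : |((m i : ℤ) : ℝ)| ≤ ((R:ℤ):ℝ) := by push_cast; exact h2
        exact_mod_cast this
      rw [Finset.mem_Icc]
      obtain ⟨hl, hr⟩ := abs_le.mp h4
      exact ⟨hl, hr⟩
    refine Set.mem_biUnion hmM ?_
    have hinn0 : ⟪P m, uv m⟫_ℝ = ‖P m‖ := by
      simp only [huvdef]
      rw [real_inner_smul_right, real_inner_self_eq_norm_sq]
      rw [pow_two, ← mul_assoc, inv_mul_cancel₀ (hPpos m).ne', one_mul]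
    constructor
    · calc |⟪w, uv m⟫_ℝ| ≤ ‖w‖ * ‖uv m‖ := abs_real_inner_le_norm _ _
        _ = ‖w‖ := by rw [huv m, mul_one]
        _ ≤ 2*E := hw2E
    · set c := ⟪w, uv m⟫_ℝ with hcdef
      have hinn : ⟪s•w - P m, uv m⟫_ℝ = s * c - ‖P m‖ := by
        rw [inner_sub_left, real_inner_smul_left, hinn0, hcdef]
      have hkey : s * ‖w - c • uv m‖ ≤ ε' := by
        have hid : s • (w - c • uv m) = (s•w - P m) - ⟪s•w - P m, uv m⟫_ℝ • uv m := by
          rw [hinn]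
          have e1 : (s•w - P m) - (s*c - ‖P m‖) • uv m
              = (s•w - (s*c) • uv m) + (‖P m‖ • uv m - P m) := by module
          rw [e1, hPuv m, sub_self, add_zero]
          module
        have h9 := proj_le_norm (uv m) (s•w - P m) (huv m)
        rw [← hid, norm_smul, Real.norm_eq_abs, abs_of_pos hs0] at h9
        linarith
      have hx0 : (0:ℝ) ≤ ‖w - c • uv m‖ := norm_nonneg _
      have hperp : ‖w - c • uv m‖ ≤ ε'/δ := by
        rw [le_div_iff₀ hδ]
        nlinarith
      show ‖w - c • uv m‖ ≤ ρ m
      simp only [hρdef]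
      split_ifs with h3
      · refine le_min hperp ?_
        have hEs : 5/6 ≤ E * s := by nlinarith
        have hf1 : E * (s * ‖w - c • uv m‖) ≤ E * ε' := mul_le_mul_of_nonneg_left hkey hE.le
        have hf2 : (5/6) * ‖w - c • uv m‖ ≤ (E*s) * ‖w - c • uv m‖ :=
          mul_le_mul_of_nonneg_right hEs hx0
        have hf3 : (0:ℝ) ≤ E * ε' := mul_nonneg hE.le hε'pos.le
        nlinarith
      · exact hperp

end
end
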